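/- arXiv:1511.03247 — 8 statements merged into one kernel-verified Lean document; each statement's English description precedes it below -/
import Mathlib

section
/- Let n be a nonnegative integer, m ≥ 1 an integer, f : ℝ → ℝ a 2m-times continuously differentiable function, and F : ℝ → ℝ an antiderivative of f (i.e., F′(x) = f(x) for all real x). Then ∑_{k=0}^{n−1} f(k) = A_m − R_m, where A_m := ∑_{j=1}^{m} γ_{m,j} ∑_{i=0}^{j−1} (F(n−1+j/2−i) − F(i−j/2)) and R_m := (1/((2m−1)!·2^{2m+1})) · ∫_0^1 (1−s)^{2m−1} (∫_{−1}^{1} v^{2m} · ∑_{j=1}^{m} γ_{m,j} j^{2m+1} · (∑_{k=0}^{n−1} f^{(2m)}(k + j·s·v/2)) dv) ds. -/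
/-- The coefficients `γ_{m,j} := (−1)^{j−1} · (2/j) · C(2m, m+j) / C(2m, m)`. -/
noncomputable def altGamma (m j : ℕ) : ℝ :=
  (-1 : ℝ) ^ (j - 1) * (2 / (j : ℝ)) * ((2 * m).choose (m + j) : ℝ) / ((2 * m).choose m : ℝ)

/-- The remainder `R_m` of the alternative (Alt) summation formula. -/
noncomputable def altR (m n : ℕ) (f : ℝ → ℝ) : ℝ :=
  1 / (((2 * m - 1).factorial : ℝ) * 2 ^ (2 * m + 1)) *
    ∫ s in (0 : ℝ)..1, (1 - s) ^ (2 * m - 1) *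
      ∫ v in (-1 : ℝ)..1, v ^ (2 * m) *
        ∑ j ∈ Finset.Icc 1 m, altGamma m j * (j : ℝ) ^ (2 * m + 1) *
          ∑ k ∈ Finset.range n, iteratedDeriv (2 * m) f ((k : ℝ) + (j : ℝ) * s * v / 2)

open Finset Polynomial MeasureTheory intervalIntegral



lemma swap_int {G : ℝ → ℝ → ℝ} (hG : Continuous (Function.uncurry G))
    {a b c d : ℝ} (hab : a ≤ b) (hcd : c ≤ d) :
    ∫ s in a..b, ∫ v in c..d, G s v = ∫ v in c..d, ∫ s in a..b, G s v := by
  rw [intervalIntegral.integral_of_le hab, intervalIntegral.integral_of_le hcd]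
  simp_rw [intervalIntegral.integral_of_le hcd, intervalIntegral.integral_of_le hab]
  apply MeasureTheory.integral_integral_swap
  rw [Measure.prod_restrict]
  apply (hG.continuousOn.integrableOn_compact (isCompact_Icc.prod isCompact_Icc)).mono_set
  exact Set.prod_mono Set.Ioc_subset_Icc_self Set.Ioc_subset_Icc_self



lemma fac_pred (q : ℕ) (hq : 0 < q) : (q : ℝ) * ((q-1).factorial : ℝ) = (q.factorial : ℝ) := by
  exact_mod_cast congrArg (Nat.cast : ℕ → ℝ) (Nat.mul_factorial_pred hq.ne')

lemma taylor_int (N : ℕ) (hN : 1 ≤ N) {f : ℝ → ℝ} (hf : ContDiff ℝ (N : ℕ∞) f) (x t : ℝ) :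
    f (x + t) = (∑ q ∈ Finset.range N, iteratedDeriv q f x * t ^ q / q.factorial)
      + (t ^ N / (N - 1).factorial) *
        ∫ s in (0:ℝ)..1, (1 - s) ^ (N - 1) * iteratedDeriv N f (x + s * t) := by
  set φ : ℝ → ℝ := fun s => ∑ q ∈ Finset.range N,
    iteratedDeriv q f (x + s * t) * t ^ q * (1 - s) ^ q / q.factorial with hφ
  set ψ : ℕ → ℝ → ℝ := fun q s =>
    iteratedDeriv q f (x + s * t) * t ^ q * (q : ℝ) * (1 - s) ^ (q - 1) / q.factorial with hψ
  have hD : ∀ q, q < N → ∀ y : ℝ, HasDerivAt (iteratedDeriv q f) (iteratedDeriv (q+1) f y) y := by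
    intro q hq y
    have hdiff : Differentiable ℝ (iteratedDeriv q f) :=
      hf.differentiable_iteratedDeriv q (by exact_mod_cast hq)
    have := (hdiff y).hasDerivAt
    rwa [iteratedDeriv_succ]
  have hder : ∀ s : ℝ, HasDerivAt φ (ψ N s) s := by
    intro s
    have h1 : HasDerivAt φ (∑ q ∈ Finset.range N, (ψ (q+1) s - ψ q s)) s := by
      apply HasDerivAt.fun_sum
      intro q hq
      rw [Finset.mem_range] at hq
      have hinner : HasDerivAt (fun s : ℝ => x + s * t) t s := by
        simpa using ((hasDerivAt_id s).mul_const t).const_add x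
      have hcomp : HasDerivAt (fun s : ℝ => iteratedDeriv q f (x + s * t))
          (iteratedDeriv (q+1) f (x + s * t) * t) s :=
        by have := (hD q hq (x + s * t)).comp s hinner; exact this
      have hpow : HasDerivAt (fun s : ℝ => (1 - s) ^ q)
          ((q : ℝ) * (1 - s) ^ (q - 1) * (-1)) s := by
        exact (hasDerivAt_pow q (1 - s)).comp s (((hasDerivAt_id s).const_sub 1))
      have := ((hcomp.mul_const (t ^ q)).fun_mul hpow).div_const (q.factorial : ℝ)
      convert this using 1
      · rfl
      have hfac : ((q+1).factorial : ℝ) = (q+1) * q.factorial := by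
        push_cast [Nat.factorial_succ]; ring
      rcases Nat.eq_zero_or_pos q with h0 | hqpos
      · subst h0; simp [ψ]
      · have hfac2 := fac_pred q hqpos
        simp only [ψ, Nat.add_sub_cancel]
        rw [hfac, ← hfac2]
        have hq0 : (((q-1).factorial : ℕ) : ℝ) ≠ 0 := by positivity
        have hq1 : ((q:ℝ)+1) ≠ 0 := by positivity
        have hq2 : (q:ℝ) ≠ 0 := by exact_mod_cast hqpos.ne'
        push_cast
        field_simp
        ring
    have h2 : (∑ q ∈ Finset.range N, (ψ (q+1) s - ψ q s)) = ψ N s := by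
      have := Finset.sum_range_sub (fun q => ψ q s) N
      rw [this]
      simp [hψ]
    rwa [h2] at h1
  have hcont : Continuous fun s : ℝ => ψ N s := by
    have hc : Continuous (iteratedDeriv N f) := hf.continuous_iteratedDeriv N le_rfl
    apply Continuous.div_const
    exact ((((hc.comp (by continuity)).mul continuous_const).mul continuous_const).mul
      (by continuity))
  have hint : ∫ s in (0:ℝ)..1, ψ N s = φ 1 - φ 0 :=
    intervalIntegral.integral_eq_sub_of_hasDerivAt (fun s _ => hder s)
      (hcont.intervalIntegrable 0 1)
  have hφ1 : φ 1 = f (x + t) := by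
    rw [hφ]
    simp only [sub_self]
    rw [Finset.sum_eq_single 0]
    · simp [iteratedDeriv_zero]
    · intro q _ hq0
      simp [zero_pow hq0]
    · intro h; exact absurd (Finset.mem_range.2 hN) h
  have hφ0 : φ 0 = ∑ q ∈ Finset.range N, iteratedDeriv q f x * t ^ q / q.factorial := by
    simp [hφ]
  have hpull : ∫ s in (0:ℝ)..1, ψ N s
      = (t ^ N / (N - 1).factorial) *
        ∫ s in (0:ℝ)..1, (1 - s) ^ (N - 1) * iteratedDeriv N f (x + s * t) := by
    rw [← intervalIntegral.integral_const_mul]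
    apply intervalIntegral.integral_congr
    intro s _
    simp only [hψ]
    have hfacN := fac_pred N hN
    have h1 : (((N-1).factorial : ℕ) : ℝ) ≠ 0 := by positivity
    have h2 : (N:ℝ) ≠ 0 := by positivity
    rw [← hfacN]
    field_simp
  rw [← hφ1, ← hφ0, ← hpull, hint]
  ring



lemma poly_alt (N : ℕ) (P : Polynomial ℝ) (hP : P.degree < N) :
    ∑ i ∈ Finset.range (N+1), (-1:ℝ)^i * (N.choose i) * P.eval (i:ℝ) = 0 := by
  induction N generalizing P with
  | zero =>
    have : P = 0 := by
      rw [← Polynomial.degree_eq_bot]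
      exact Nat.WithBot.lt_zero_iff.mp (by exact_mod_cast hP)
    simp [this]
  | succ N ih =>
    set Q : Polynomial ℝ := P - P.comp (X + C 1) with hQ
    have hQeval : ∀ i : ℕ, Q.eval (i:ℝ) = P.eval (i:ℝ) - P.eval ((i:ℝ)+1) := by
      intro i; simp [hQ, Polynomial.eval_comp]
    have hQdeg : Q.degree < N := by
      rcases eq_or_ne P 0 with h0 | h0
      · simp [hQ, h0]
      have hmonic : (X + C (1:ℝ)).Monic := Polynomial.monic_X_add_C 1
      have hnd1 : (X + C (1:ℝ)).natDegree = 1 := Polynomial.natDegree_X_add_C (x := (1:ℝ))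
      have hc0 : P.comp (X + C 1) ≠ 0 := by
        intro hc
        apply h0
        apply Polynomial.taylor_injective (1:ℝ)
        rw [Polynomial.taylor_apply, hc, map_zero]
      have hcomp_deg : (P.comp (X + C 1)).degree = P.degree := by
        rw [Polynomial.degree_eq_natDegree h0, Polynomial.degree_eq_natDegree hc0]
        rw [Polynomial.natDegree_comp, hnd1, mul_one]
      have hlc : (P.comp (X + C 1)).leadingCoeff = P.leadingCoeff := by
        rw [Polynomial.leadingCoeff_comp (by rw [hnd1]; exact one_ne_zero),
          hmonic.leadingCoeff, one_pow, mul_one]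
      have hsub : Q.degree < P.degree := by
        rw [hQ]
        have := Polynomial.degree_sub_lt hcomp_deg.symm h0 hlc.symm
        -- degree_sub_lt : degree p = degree q → p ≠ 0 → leadingCoeff p = leadingCoeff q →
        --   degree (p - q) < degree p
        exact this
      calc Q.degree < P.degree := hsub
        _ ≤ N := by
          have := Polynomial.degree_le_natDegree (p := P)
          rcases eq_or_ne P 0 with h | h
          · simp [h]
          · have hnd : (P.natDegree : ℕ) < N + 1 := by
              have := Polynomial.degree_eq_natDegree h
              rw [this] at hP
              exact_mod_cast hP
            rw [Polynomial.degree_eq_natDegree h]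
            exact_mod_cast Nat.lt_succ_iff.mp hnd
    have key : ∑ i ∈ Finset.range (N+1+1), (-1:ℝ)^i * ((N+1).choose i) * P.eval (i:ℝ)
        = ∑ i ∈ Finset.range (N+1), (-1:ℝ)^i * (N.choose i) * Q.eval (i:ℝ) := by
      have expand : ∀ i ∈ Finset.range (N+1), (-1:ℝ)^i * (N.choose i) * Q.eval (i:ℝ)
          = (-1:ℝ)^i * (N.choose i) * P.eval (i:ℝ)
            - (-1:ℝ)^i * (N.choose i) * P.eval ((i:ℝ)+1) := by
        intro i _; rw [hQeval]; ring
      rw [Finset.sum_congr rfl expand, Finset.sum_sub_distrib]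
      -- LHS: split using sum_range_succ' : ∑_{i<n+1} f i = ∑_{i<n} f (i+1) + f 0
      rw [Finset.sum_range_succ' _ (N+1)]
      have choose_split : ∀ i, ((N+1).choose (i+1) : ℝ) = (N.choose i : ℝ) + (N.choose (i+1) : ℝ) := by
        intro i; exact_mod_cast Nat.choose_succ_succ N i
      have step : ∀ i ∈ Finset.range (N+1),
          (-1:ℝ)^(i+1) * ((N+1).choose (i+1)) * P.eval ((i:ℝ)+1)
          = -((-1:ℝ)^i * (N.choose i) * P.eval ((i:ℝ)+1))
            - ((-1:ℝ)^i * (N.choose (i+1)) * P.eval ((i:ℝ)+1)) := by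
        intro i _
        rw [choose_split]
        ring
      have cast1 : ∀ i : ℕ, (((i+1 : ℕ)):ℝ) = (i:ℝ) + 1 := by intro i; push_cast; ring
      calc (∑ i ∈ Finset.range (N+1), (-1:ℝ)^(i+1) * ((N+1).choose (i+1)) * P.eval (((i+1:ℕ)):ℝ))
            + (-1:ℝ)^0 * ((N+1).choose 0) * P.eval ((0:ℕ):ℝ)
          = (∑ i ∈ Finset.range (N+1),
              (-((-1:ℝ)^i * (N.choose i) * P.eval ((i:ℝ)+1))
               - ((-1:ℝ)^i * (N.choose (i+1)) * P.eval ((i:ℝ)+1)))) + P.eval 0 := by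
            congr 1
            · apply Finset.sum_congr rfl
              intro i hi
              rw [cast1 i, step i hi]
            · simp
        _ = ∑ i ∈ Finset.range (N+1), (-1:ℝ)^i * (N.choose i) * P.eval (i:ℝ)
            - ∑ i ∈ Finset.range (N+1), (-1:ℝ)^i * (N.choose i) * P.eval ((i:ℝ)+1) := by
            rw [Finset.sum_sub_distrib]
            -- Need: ∑ -(a i) - ∑ b i + P.eval 0 = ∑ c i - ∑ a i
            -- where c i = (-1)^i C(N,i) P(i), and ∑ b i relates by index shift:
            -- b i = (-1)^i C(N,i+1) P(i+1); note ∑_{i<N+1} c i = P(0) + ∑_{i<N} c (i+1)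
            have shift : ∑ i ∈ Finset.range (N+1), (-1:ℝ)^i * (N.choose i) * P.eval (i:ℝ)
                = P.eval 0 + ∑ i ∈ Finset.range N, (-1:ℝ)^(i+1) * (N.choose (i+1)) * P.eval (((i+1:ℕ)):ℝ) := by
              rw [Finset.sum_range_succ' _ N]
              simp [add_comm]
            have ext0 : ∑ i ∈ Finset.range (N+1), (-1:ℝ)^i * (N.choose (i+1)) * P.eval ((i:ℝ)+1)
                = ∑ i ∈ Finset.range N, (-1:ℝ)^i * (N.choose (i+1)) * P.eval ((i:ℝ)+1) := by
              rw [Finset.sum_range_succ]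
              simp [Nat.choose_succ_self]
            have shift2 : ∑ i ∈ Finset.range N, (-1:ℝ)^(i+1) * (N.choose (i+1)) * P.eval (((i+1:ℕ)):ℝ)
                = -∑ i ∈ Finset.range N, (-1:ℝ)^i * (N.choose (i+1)) * P.eval ((i:ℝ)+1) := by
              rw [← Finset.sum_neg_distrib]
              apply Finset.sum_congr rfl
              intro i _
              rw [cast1 i]
              ring
            rw [ext0, shift, shift2, Finset.sum_neg_distrib]
            ring
    rw [key, ih Q hQdeg]

lemma gamma_sum (m p : ℕ) (hm : 1 ≤ m) (hp : p < m) :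
    ∑ j ∈ Finset.Icc 1 m, altGamma m j * (j:ℝ)^(2*p+1) = if p = 0 then 1 else 0 := by
  set g : ℕ → ℝ := fun i => (-1:ℝ)^i * ((2*m).choose i) * ((i:ℝ) - m)^(2*p) with hg
  have hT : ∑ i ∈ Finset.range (2*m+1), g i = 0 := by
    have hdeg : ((X - C (m:ℝ))^(2*p)).degree < ((2*m : ℕ) : WithBot ℕ) := by
      rw [Polynomial.degree_pow, Polynomial.degree_X_sub_C, nsmul_eq_mul, mul_one]
      exact_mod_cast (by omega : 2*p < 2*m)
    have := poly_alt (2*m) ((X - C (m:ℝ))^(2*p)) hdeg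
    simpa [hg] using this
  -- split the sum
  have hsplit : ∑ i ∈ Finset.range (2*m+1), g i
      = (∑ i ∈ Finset.range m, g i) + g m + ∑ i ∈ Finset.Icc (m+1) (2*m), g i := by
    rw [Finset.range_eq_Ico, ← Finset.sum_Ico_consecutive g (Nat.zero_le (m+1)) (by omega),
      ← Finset.range_eq_Ico, Finset.sum_range_succ, Finset.Ico_add_one_right_eq_Icc]
  have hright : ∑ i ∈ Finset.Icc (m+1) (2*m), g i = ∑ j ∈ Finset.Icc 1 m, g (m + j) := by
    have hmap : Finset.Icc (m+1) (2*m) = Finset.map (addLeftEmbedding m) (Finset.Icc 1 m) := by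
      rw [Finset.map_add_left_Icc]
      congr 1
      omega
    rw [hmap, Finset.sum_map]
    apply Finset.sum_congr rfl
    intro j hj
    rfl
  have hleft : ∑ i ∈ Finset.range m, g i = ∑ j ∈ Finset.Icc 1 m, g (m - j) := by
    apply Finset.sum_nbij' (i := fun i => m - i) (j := fun j => m - j)
    · intro a ha; simp at ha ⊢; omega
    · intro a ha; simp at ha ⊢; omega
    · intro a ha; simp at ha; omega
    · intro a ha; simp at ha; omega
    · intro a ha; simp at ha; congr 1; omega
  have hpair : ∀ j ∈ Finset.Icc 1 m, g (m - j) + g (m + j)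
      = 2 * ((-1:ℝ)^m * ((-1:ℝ)^j * ((2*m).choose (m+j)) * (j:ℝ)^(2*p))) := by
    intro j hj
    simp only [Finset.mem_Icc] at hj
    have hjm : j ≤ m := hj.2
    have hcast : ((m - j : ℕ) : ℝ) = (m:ℝ) - j := by
      push_cast [Nat.cast_sub hjm]; ring
    have hchoose : (2*m).choose (m - j) = (2*m).choose (m + j) := by
      rw [← Nat.choose_symm (by omega : m + j ≤ 2*m)]
      congr 1; omega
    have hsign : (-1:ℝ)^(m - j) = (-1:ℝ)^(m + j) := by
      rw [show m + j = (m - j) + 2*j by omega, pow_add, pow_mul]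
      simp
    have hpow : ((m:ℝ) - j - m)^(2*p) = ((j:ℝ))^(2*p) := by
      rw [show (m:ℝ) - j - m = -(j:ℝ) by ring]
      rw [show (2*p) = 2*p from rfl]
      rw [neg_pow, pow_mul]
      simp [pow_mul]
    have hpow2 : (((m + j : ℕ):ℝ) - m)^(2*p) = ((j:ℝ))^(2*p) := by
      push_cast; ring_nf
    simp only [hg, hcast, hchoose, hsign, hpow, hpow2, pow_add]
    ring
  have hgm : g m = (-1:ℝ)^m * ((2*m).choose m) * (0:ℝ)^(2*p) := by
    simp [hg]
  set S := ∑ j ∈ Finset.Icc 1 m, (-1:ℝ)^j * ((2*m).choose (m+j)) * (j:ℝ)^(2*p) with hS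
  have hkey : ((2*m).choose m : ℝ) * (0:ℝ)^(2*p) + 2 * S = 0 := by
    have h1 : ∑ i ∈ Finset.range (2*m+1), g i
        = (-1:ℝ)^m * (((2*m).choose m : ℝ) * (0:ℝ)^(2*p) + 2 * S) := by
      rw [hsplit, hright, hleft]
      have hAB : (∑ j ∈ Finset.Icc 1 m, g (m - j)) + g m + ∑ j ∈ Finset.Icc 1 m, g (m + j)
          = g m + ∑ j ∈ Finset.Icc 1 m, (g (m - j) + g (m + j)) := by
        rw [Finset.sum_add_distrib]; ring
      rw [hAB, Finset.sum_congr rfl hpair, hgm]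
      have h2 : ∑ j ∈ Finset.Icc 1 m,
          2 * ((-1:ℝ)^m * ((-1:ℝ)^j * ((2*m).choose (m+j)) * (j:ℝ)^(2*p)))
          = (-1:ℝ)^m * (2 * S) := by
        rw [hS, Finset.mul_sum, Finset.mul_sum]
        apply Finset.sum_congr rfl
        intro j hj
        ring
      rw [h2]
      ring
    have hm1 : (-1:ℝ)^m ≠ 0 := by positivity
    have := hT
    rw [h1] at this
    exact (mul_eq_zero.mp this).resolve_left hm1
  have hC : (((2*m).choose m : ℕ) : ℝ) ≠ 0 := by
    exact_mod_cast (Nat.choose_pos (by omega : m ≤ 2*m)).ne'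
  have hfinal : ∀ j ∈ Finset.Icc 1 m, altGamma m j * (j:ℝ)^(2*p+1)
      = -2 * ((-1:ℝ)^j * ((2*m).choose (m+j)) * (j:ℝ)^(2*p)) / ((2*m).choose m : ℝ) := by
    intro j hj
    simp only [Finset.mem_Icc] at hj
    have hj0 : (j:ℝ) ≠ 0 := by exact_mod_cast (by omega : j ≠ 0)
    have hsign : (-1:ℝ)^(j-1) = -(-1:ℝ)^j := by
      rw [show j = (j-1)+1 by omega, pow_succ]
      simp
    rw [altGamma, hsign, pow_succ, pow_mul]
    field_simp
  rw [Finset.sum_congr rfl hfinal]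
  have : ∑ j ∈ Finset.Icc 1 m, -2 * ((-1:ℝ)^j * ((2*m).choose (m+j)) * (j:ℝ)^(2*p)) / ((2*m).choose m : ℝ)
      = -2 * S / ((2*m).choose m : ℝ) := by
    rw [hS, Finset.mul_sum, Finset.sum_div]
  rw [this]
  have hS' : S = -(((2*m).choose m : ℝ) * (0:ℝ)^(2*p)) / 2 := by linarith
  rw [hS']
  rcases Nat.eq_zero_or_pos p with h0 | hppos
  · subst h0
    rw [if_pos rfl]
    norm_num
    field_simp
  · rw [zero_pow (by omega : 2*p ≠ 0), if_neg (by omega)]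
    ring



lemma teles (F : ℝ → ℝ) (n j : ℕ) (hj : 1 ≤ j) :
    ∑ i ∈ Finset.range j, (F ((n:ℝ) - 1 + (j:ℝ)/2 - (i:ℝ)) - F ((i:ℝ) - (j:ℝ)/2))
      = ∑ k ∈ Finset.range n, (F ((k:ℝ) + (j:ℝ)/2) - F ((k:ℝ) - (j:ℝ)/2)) := by
  have stepA : ∑ i ∈ Finset.range j, F ((i:ℝ) - (j:ℝ)/2)
      = ∑ i ∈ Finset.range j, F (-1 + (j:ℝ)/2 - (i:ℝ)) := by
    rw [← Finset.sum_range_reflect (fun i => F ((i:ℝ) - (j:ℝ)/2)) j]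
    apply Finset.sum_congr rfl
    intro i hi
    rw [Finset.mem_range] at hi
    congr 1
    have : ((j - 1 - i : ℕ) : ℝ) = (j:ℝ) - 1 - (i:ℝ) := by
      push_cast [Nat.cast_sub (by omega : i ≤ j - 1), Nat.cast_sub hj]
      ring
    rw [this]
    ring
  have key : ∑ i ∈ Finset.range j, (F ((n:ℝ) - 1 + (j:ℝ)/2 - (i:ℝ)) - F ((i:ℝ) - (j:ℝ)/2))
      = ∑ i ∈ Finset.range j, ∑ k ∈ Finset.range n,
          (F ((k:ℝ) + (j:ℝ)/2 - (i:ℝ)) - F ((k:ℝ) - 1 + (j:ℝ)/2 - (i:ℝ))) := by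
    rw [Finset.sum_sub_distrib, stepA, ← Finset.sum_sub_distrib]
    apply Finset.sum_congr rfl
    intro i _
    have hB := Finset.sum_range_sub (fun k => F ((k:ℝ) - 1 + (j:ℝ)/2 - (i:ℝ))) n
    have : ∀ k : ℕ, F (((k+1 : ℕ):ℝ) - 1 + (j:ℝ)/2 - (i:ℝ)) = F ((k:ℝ) + (j:ℝ)/2 - (i:ℝ)) := by
      intro k; congr 1; push_cast; ring
    have h0 : F (((0:ℕ):ℝ) - 1 + (j:ℝ)/2 - (i:ℝ)) = F (-1 + (j:ℝ)/2 - (i:ℝ)) := by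
      congr 1; push_cast; ring
    simp only [this] at hB
    rw [← h0]
    exact hB.symm
  rw [key, Finset.sum_comm]
  apply Finset.sum_congr rfl
  intro k _
  have hC := Finset.sum_range_sub' (fun i => F ((k:ℝ) + (j:ℝ)/2 - (i:ℝ))) j
  have hterm : ∀ i : ℕ, F ((k:ℝ) + (j:ℝ)/2 - ((i+1 : ℕ):ℝ)) = F ((k:ℝ) - 1 + (j:ℝ)/2 - (i:ℝ)) := by
    intro i; congr 1; push_cast; ring
  calc ∑ i ∈ Finset.range j, (F ((k:ℝ) + (j:ℝ)/2 - (i:ℝ)) - F ((k:ℝ) - 1 + (j:ℝ)/2 - (i:ℝ)))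
      = ∑ i ∈ Finset.range j, (F ((k:ℝ) + (j:ℝ)/2 - (i:ℝ)) - F ((k:ℝ) + (j:ℝ)/2 - ((i+1:ℕ):ℝ))) := by
        apply Finset.sum_congr rfl
        intro i _
        rw [hterm i]
    _ = F ((k:ℝ) + (j:ℝ)/2 - ((0:ℕ):ℝ)) - F ((k:ℝ) + (j:ℝ)/2 - ((j:ℕ):ℝ)) := hC
    _ = F ((k:ℝ) + (j:ℝ)/2) - F ((k:ℝ) - (j:ℝ)/2) := by
        congr 1 <;> [skip; congr 1] <;> push_cast <;> ring

lemma step2 {f F : ℝ → ℝ} (hf : Continuous f) (hF : ∀ x, HasDerivAt F (f x) x) (x h : ℝ) :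
    F (x + h) - F (x - h) = ∫ v in (-1:ℝ)..1, f (x + v * h) * h := by
  have hG : ∀ v : ℝ, HasDerivAt (fun v : ℝ => F (x + v * h)) (f (x + v * h) * h) v := by
    intro v
    have hin : HasDerivAt (fun v : ℝ => x + v * h) h v := by
      simpa using ((hasDerivAt_id v).mul_const h).const_add x
    exact (hF (x + v * h)).comp v hin
  have := intervalIntegral.integral_eq_sub_of_hasDerivAt (f := fun v : ℝ => F (x + v * h))
    (f' := fun v => f (x + v * h) * h) (a := (-1:ℝ)) (b := 1)
    (fun v _ => hG v) (((hf.comp (by continuity)).mul continuous_const).intervalIntegrable _ _)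
  rw [this]
  ring_nf

lemma perpoint (m : ℕ) (hm : 1 ≤ m) (f F : ℝ → ℝ) (hf : ContDiff ℝ ((2*m : ℕ) : ℕ∞) f)
    (hF : ∀ x, HasDerivAt F (f x) x) (x : ℝ) :
    f x = (∑ j ∈ Finset.Icc 1 m, altGamma m j * (F (x + (j:ℝ)/2) - F (x - (j:ℝ)/2)))
      - ∑ j ∈ Finset.Icc 1 m, altGamma m j * ((((j:ℝ)/2)^(2*m+1))/((2*m-1).factorial)) *
          ∫ v in (-1:ℝ)..1, v^(2*m) * ∫ s in (0:ℝ)..1,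
            (1-s)^(2*m-1) * iteratedDeriv (2*m) f (x + s*(v*((j:ℝ)/2))) := by
  have hN : 1 ≤ 2*m := by omega
  set D := iteratedDeriv (2*m) f with hD
  have hDc : Continuous D := hf.continuous_iteratedDeriv (2*m) (by exact_mod_cast le_rfl)
  have hfc : Continuous f := hf.continuous
  -- step 3 : expansion of the integral for each j
  have step3 : ∀ h : ℝ, ∫ v in (-1:ℝ)..1, f (x + v * h) * h
      = (∑ q ∈ Finset.range (2*m),
          iteratedDeriv q f x * h^(q+1) / q.factorial * ((1 - (-1:ℝ)^(q+1))/(q+1)))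
        + (h^(2*m+1)/((2*m-1).factorial)) *
          ∫ v in (-1:ℝ)..1, v^(2*m) * ∫ s in (0:ℝ)..1, (1-s)^(2*m-1) * D (x + s*(v*h)) := by
    intro h
    have hinner_cont : Continuous fun v : ℝ =>
        ∫ s in (0:ℝ)..1, (1-s)^(2*m-1) * D (x + s*(v*h)) := by
      apply intervalIntegral.continuous_parametric_intervalIntegral_of_continuous'
      apply Continuous.mul
      · fun_prop
      · exact hDc.comp (by fun_prop)
    have hptwise : ∀ v : ℝ, f (x + v * h) * h
        = (∑ q ∈ Finset.range (2*m), (iteratedDeriv q f x * h^(q+1) / q.factorial) * v^q)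
          + (h^(2*m+1)/((2*m-1).factorial)) *
            (v^(2*m) * ∫ s in (0:ℝ)..1, (1-s)^(2*m-1) * D (x + s*(v*h))) := by
      intro v
      rw [taylor_int (2*m) hN hf x (v*h)]
      rw [add_mul, Finset.sum_mul]
      congr 1
      · apply Finset.sum_congr rfl
        intro q _
        rw [mul_pow]
        ring
      · rw [mul_pow]
        ring
    rw [intervalIntegral.integral_congr (g := fun v =>
        (∑ q ∈ Finset.range (2*m), (iteratedDeriv q f x * h^(q+1) / q.factorial) * v^q)
          + (h^(2*m+1)/((2*m-1).factorial)) *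
            (v^(2*m) * ∫ s in (0:ℝ)..1, (1-s)^(2*m-1) * D (x + s*(v*h))))
      (fun v _ => hptwise v)]
    rw [intervalIntegral.integral_add (by apply Continuous.intervalIntegrable; continuity)
      (by apply Continuous.intervalIntegrable
          exact continuous_const.mul ((continuous_pow _).mul hinner_cont))]
    congr 1
    · rw [intervalIntegral.integral_finset_sum
        (fun q _ => by apply Continuous.intervalIntegrable; continuity)]
      apply Finset.sum_congr rfl
      intro q _
      rw [intervalIntegral.integral_const_mul, integral_pow]
      norm_num
    · rw [intervalIntegral.integral_const_mul]
  -- combine with step2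
  have expand : ∀ j ∈ Finset.Icc 1 m, altGamma m j * (F (x + (j:ℝ)/2) - F (x - (j:ℝ)/2))
      = altGamma m j * ((∑ q ∈ Finset.range (2*m),
          iteratedDeriv q f x * ((j:ℝ)/2)^(q+1) / q.factorial * ((1 - (-1:ℝ)^(q+1))/(q+1))))
        + altGamma m j * ((((j:ℝ)/2)^(2*m+1))/((2*m-1).factorial)) *
          ∫ v in (-1:ℝ)..1, v^(2*m) * ∫ s in (0:ℝ)..1,
            (1-s)^(2*m-1) * D (x + s*(v*((j:ℝ)/2))) := by
    intro j _
    rw [step2 hfc hF x ((j:ℝ)/2), step3 ((j:ℝ)/2)]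
    ring
  rw [Finset.sum_congr rfl expand, Finset.sum_add_distrib]
  have main : ∑ j ∈ Finset.Icc 1 m, altGamma m j * ((∑ q ∈ Finset.range (2*m),
      iteratedDeriv q f x * ((j:ℝ)/2)^(q+1) / q.factorial * ((1 - (-1:ℝ)^(q+1))/(q+1)))) = f x := by
    simp_rw [Finset.mul_sum]
    rw [Finset.sum_comm]
    rw [Finset.sum_eq_single_of_mem 0 (Finset.mem_range.mpr (by omega))]
    · have h0 := gamma_sum m 0 hm hm
      norm_num at h0
      simp only [iteratedDeriv_zero, Nat.factorial_zero]
      have : ∀ j ∈ Finset.Icc 1 m, altGamma m j *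
          (f x * ((j:ℝ)/2)^(0+1) / ((1:ℕ):ℝ) * ((1 - (-1:ℝ)^(0+1))/(((0:ℕ):ℝ)+1)))
          = f x * (altGamma m j * (j:ℝ)) := by
        intro j _
        norm_num
        ring
      rw [Finset.sum_congr rfl this, ← Finset.mul_sum, h0, mul_one]
    · intro q hq hq0
      rcases Nat.even_or_odd q with he | ho
      · obtain ⟨p, hp⟩ := he
        have hppos : p ≠ 0 := by omega
        have hpm : p < m := by rw [Finset.mem_range] at hq; omega
        have hgs := gamma_sum m p hm hpm
        rw [if_neg hppos] at hgs
        have hterm : ∀ j ∈ Finset.Icc 1 m, altGamma m j *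
            (iteratedDeriv q f x * ((j:ℝ)/2)^(q+1) / q.factorial * ((1 - (-1:ℝ)^(q+1))/((q:ℝ)+1)))
            = (iteratedDeriv q f x / q.factorial * ((1 - (-1:ℝ)^(q+1))/((q:ℝ)+1)) / 2^(q+1))
              * (altGamma m j * (j:ℝ)^(2*p+1)) := by
          intro j _
          rw [div_pow, show q + 1 = 2*p+1 by omega]
          ring
        rw [Finset.sum_congr rfl hterm, ← Finset.mul_sum, hgs, mul_zero]
      · have hev : Even (q+1) := Odd.add_one ho
        have : (-1:ℝ)^(q+1) = 1 := hev.neg_one_pow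
        rw [this]
        simp
  rw [main]
  ring

/-- The Alt summation formula: `∑_{k=0}^{n−1} f(k) = A_m − R_m`. -/
theorem alt_summation_formula (n m : ℕ) (hm : 1 ≤ m) (f F : ℝ → ℝ)
    (hf : ContDiff ℝ (2 * m) f) (hF : ∀ x : ℝ, HasDerivAt F (f x) x) :
    ∑ k ∈ Finset.range n, f k =
      (∑ j ∈ Finset.Icc 1 m, altGamma m j *
          ∑ i ∈ Finset.range j,
            (F ((n : ℝ) - 1 + (j : ℝ) / 2 - (i : ℝ)) - F ((i : ℝ) - (j : ℝ) / 2)))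
        - altR m n f := by
  have hf' : ContDiff ℝ ((2*m : ℕ) : ℕ∞) f := by exact_mod_cast hf
  set D := iteratedDeriv (2*m) f with hDdef
  have hDc : Continuous D := hf'.continuous_iteratedDeriv (2*m) (by exact_mod_cast le_rfl)
  -- the A part
  have hA : ∑ j ∈ Finset.Icc 1 m, altGamma m j *
        ∑ i ∈ Finset.range j, (F ((n:ℝ) - 1 + (j:ℝ)/2 - (i:ℝ)) - F ((i:ℝ) - (j:ℝ)/2))
      = ∑ k ∈ Finset.range n, ∑ j ∈ Finset.Icc 1 m,
          altGamma m j * (F ((k:ℝ) + (j:ℝ)/2) - F ((k:ℝ) - (j:ℝ)/2)) := by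
    have hj1 : ∀ j ∈ Finset.Icc 1 m, altGamma m j *
        ∑ i ∈ Finset.range j, (F ((n:ℝ) - 1 + (j:ℝ)/2 - (i:ℝ)) - F ((i:ℝ) - (j:ℝ)/2))
        = ∑ k ∈ Finset.range n, altGamma m j * (F ((k:ℝ) + (j:ℝ)/2) - F ((k:ℝ) - (j:ℝ)/2)) := by
      intro j hj
      rw [teles F n j (Finset.mem_Icc.mp hj).1, Finset.mul_sum]
    rw [Finset.sum_congr rfl hj1, Finset.sum_comm]
  -- the remainder part
  set W : ℕ → ℕ → ℝ := fun k j => ∫ v in (-1:ℝ)..1, v^(2*m) * ∫ s in (0:ℝ)..1,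
    (1-s)^(2*m-1) * D ((k:ℝ) + s*(v*((j:ℝ)/2))) with hW
  have hR : ∑ k ∈ Finset.range n, ∑ j ∈ Finset.Icc 1 m,
      altGamma m j * ((((j:ℝ)/2)^(2*m+1))/((2*m-1).factorial)) * W k j = altR m n f := by
    have hDcont2 : ∀ (j k : ℕ), Continuous (Function.uncurry fun s v : ℝ =>
        (1-s)^(2*m-1) * v^(2*m) * D ((k:ℝ) + (j:ℝ)*s*v/2)) := by
      intro j k
      apply Continuous.mul
      · fun_prop
      · exact hDc.comp (by fun_prop)
    -- step R3
    have hR3 : ∀ (j k : ℕ), ∫ s in (0:ℝ)..1, (1-s)^(2*m-1) *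
        ∫ v in (-1:ℝ)..1, v^(2*m) * D ((k:ℝ) + (j:ℝ)*s*v/2) = W k j := by
      intro j k
      have e1 : ∀ s ∈ Set.uIcc (0:ℝ) 1, (1-s)^(2*m-1) *
          ∫ v in (-1:ℝ)..1, v^(2*m) * D ((k:ℝ) + (j:ℝ)*s*v/2)
          = ∫ v in (-1:ℝ)..1, (1-s)^(2*m-1) * v^(2*m) * D ((k:ℝ) + (j:ℝ)*s*v/2) := by
        intro s _
        rw [← intervalIntegral.integral_const_mul]
        apply intervalIntegral.integral_congr
        intro v _
        ring
      rw [intervalIntegral.integral_congr e1]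
      rw [swap_int (hDcont2 j k) (by norm_num) (by norm_num)]
      rw [hW]
      apply intervalIntegral.integral_congr
      intro v _
      dsimp only
      rw [← intervalIntegral.integral_const_mul]
      apply intervalIntegral.integral_congr
      intro s _
      dsimp only
      have harg : (k:ℝ) + (j:ℝ)*s*v/2 = (k:ℝ) + s*(v*((j:ℝ)/2)) := by ring
      rw [harg]
      ring
    -- unfold altR and pull sums out
    rw [altR]
    have hJ : ∀ s : ℝ, ∫ v in (-1:ℝ)..1, v ^ (2 * m) *
        ∑ j ∈ Finset.Icc 1 m, altGamma m j * (j : ℝ) ^ (2 * m + 1) *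
          ∑ k ∈ Finset.range n, D ((k : ℝ) + (j : ℝ) * s * v / 2)
        = ∑ j ∈ Finset.Icc 1 m, ∑ k ∈ Finset.range n,
            altGamma m j * (j : ℝ) ^ (2 * m + 1) *
              ∫ v in (-1:ℝ)..1, v^(2*m) * D ((k:ℝ) + (j:ℝ)*s*v/2) := by
      intro s
      have e : ∀ v ∈ Set.uIcc (-1:ℝ) 1, v ^ (2 * m) *
          ∑ j ∈ Finset.Icc 1 m, altGamma m j * (j : ℝ) ^ (2 * m + 1) *
            ∑ k ∈ Finset.range n, D ((k : ℝ) + (j : ℝ) * s * v / 2)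
          = ∑ j ∈ Finset.Icc 1 m, ∑ k ∈ Finset.range n,
              altGamma m j * (j : ℝ) ^ (2 * m + 1) * (v^(2*m) * D ((k:ℝ) + (j:ℝ)*s*v/2)) := by
        intro v _
        rw [Finset.mul_sum]
        apply Finset.sum_congr rfl
        intro j _
        rw [Finset.mul_sum, Finset.mul_sum]
        apply Finset.sum_congr rfl
        intro k _
        ring
      rw [intervalIntegral.integral_congr e]
      rw [intervalIntegral.integral_finset_sum (fun j _ => by
        apply Continuous.intervalIntegrable
        apply continuous_finset_sum
        intro k _
        exact continuous_const.mul ((continuous_pow _).mul (hDc.comp (by fun_prop))))]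
      apply Finset.sum_congr rfl
      intro j _
      rw [intervalIntegral.integral_finset_sum (fun k _ => by
        apply Continuous.intervalIntegrable
        exact continuous_const.mul ((continuous_pow _).mul (hDc.comp (by fun_prop))))]
      apply Finset.sum_congr rfl
      intro k _
      rw [intervalIntegral.integral_const_mul]
    have hparam : ∀ (j k : ℕ), Continuous fun s : ℝ =>
        ∫ v in (-1:ℝ)..1, v^(2*m) * D ((k:ℝ) + (j:ℝ)*s*v/2) := by
      intro j k
      apply intervalIntegral.continuous_parametric_intervalIntegral_of_continuous'
      apply Continuous.mul
      · fun_prop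
      · exact hDc.comp (by fun_prop)
    have hout : ∫ s in (0:ℝ)..1, (1 - s) ^ (2 * m - 1) *
        ∫ v in (-1:ℝ)..1, v ^ (2 * m) *
          ∑ j ∈ Finset.Icc 1 m, altGamma m j * (j : ℝ) ^ (2 * m + 1) *
            ∑ k ∈ Finset.range n, D ((k : ℝ) + (j : ℝ) * s * v / 2)
        = ∑ j ∈ Finset.Icc 1 m, ∑ k ∈ Finset.range n,
            altGamma m j * (j : ℝ) ^ (2 * m + 1) *
              ∫ s in (0:ℝ)..1, (1-s)^(2*m-1) *
                ∫ v in (-1:ℝ)..1, v^(2*m) * D ((k:ℝ) + (j:ℝ)*s*v/2) := by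
      have e : ∀ s ∈ Set.uIcc (0:ℝ) 1, (1 - s) ^ (2 * m - 1) *
          ∫ v in (-1:ℝ)..1, v ^ (2 * m) *
            ∑ j ∈ Finset.Icc 1 m, altGamma m j * (j : ℝ) ^ (2 * m + 1) *
              ∑ k ∈ Finset.range n, D ((k : ℝ) + (j : ℝ) * s * v / 2)
          = ∑ j ∈ Finset.Icc 1 m, ∑ k ∈ Finset.range n,
              altGamma m j * (j : ℝ) ^ (2 * m + 1) *
                ((1-s)^(2*m-1) * ∫ v in (-1:ℝ)..1, v^(2*m) * D ((k:ℝ) + (j:ℝ)*s*v/2)) := by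
        intro s _
        rw [hJ s, Finset.mul_sum]
        apply Finset.sum_congr rfl
        intro j _
        rw [Finset.mul_sum]
        apply Finset.sum_congr rfl
        intro k _
        ring
      rw [intervalIntegral.integral_congr e]
      rw [intervalIntegral.integral_finset_sum (fun j _ => by
        apply Continuous.intervalIntegrable
        apply continuous_finset_sum
        intro k _
        exact continuous_const.mul ((by fun_prop : Continuous fun s:ℝ => (1-s)^(2*m-1)).mul
          (hparam j k)))]
      apply Finset.sum_congr rfl
      intro j _
      rw [intervalIntegral.integral_finset_sum (fun k _ => by
        apply Continuous.intervalIntegrable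
        exact continuous_const.mul ((by fun_prop : Continuous fun s:ℝ => (1-s)^(2*m-1)).mul
          (hparam j k)))]
      apply Finset.sum_congr rfl
      intro k _
      rw [intervalIntegral.integral_const_mul]
    rw [hout]
    rw [Finset.sum_comm]
    rw [Finset.mul_sum]
    apply Finset.sum_congr rfl
    intro k _
    rw [Finset.mul_sum]
    apply Finset.sum_congr rfl
    intro j _
    rw [hR3 k j, div_pow]
    ring
  -- conclusion
  have hper : ∀ k ∈ Finset.range n, f (k:ℝ)
      = (∑ j ∈ Finset.Icc 1 m, altGamma m j * (F ((k:ℝ) + (j:ℝ)/2) - F ((k:ℝ) - (j:ℝ)/2)))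
        - ∑ j ∈ Finset.Icc 1 m, altGamma m j * ((((j:ℝ)/2)^(2*m+1))/((2*m-1).factorial)) * W k j :=
    fun k _ => perpoint m hm f F hf' hF (k:ℝ)
  rw [Finset.sum_congr rfl hper, Finset.sum_sub_distrib, hR, ← hA]
end

section
/- For every integer m ≥ 1, the coefficients sum to one in both forms: ∑_{j=1}^{m} γ_{m,j} · j = 1 and ∑_{α=1−m}^{m−1} τ_{m,1+|α|} = 1. -/
/-- The coefficients `τ_{m,r} := ∑_{β=0}^{⌊(m−r)/2⌋} γ_{m,r+2β}`. -/
noncomputable def altTau (m r : ℕ) : ℝ :=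
  ∑ β ∈ Finset.range ((m - r) / 2 + 1), altGamma m (r + 2 * β)
open Finset

lemma choose_central_eq (m : ℕ) (hm : 1 ≤ m) :
    (2 * m).choose m = 2 * (2 * m - 1).choose m := by
  have h1 : 2 * m = (2 * m - 1) + 1 := by omega
  have h2 : m = (m - 1) + 1 := by omega
  have h3 : (2 * m - 1).choose (m - 1) = (2 * m - 1).choose m := by
    have := Nat.choose_symm (n := 2 * m - 1) (k := m) (by omega)
    rw [show 2 * m - 1 - m = m - 1 by omega] at this
    exact this
  calc (2 * m).choose m = ((2*m-1)+1).choose ((m-1)+1) := by rw [← h1, ← h2]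
    _ = (2*m-1).choose (m-1) + (2*m-1).choose ((m-1)+1) := Nat.choose_succ_succ' _ _
    _ = 2 * (2 * m - 1).choose m := by rw [h3, ← h2]; ring

lemma key_alt_sum (m : ℕ) (hm : 1 ≤ m) :
    ∑ j ∈ Icc 1 m, (-1 : ℝ) ^ (j - 1) * ((2 * m).choose (m + j) : ℝ)
      = ((2 * m - 1).choose m : ℝ) := by
  have hre : ∑ j ∈ Icc 1 m, (-1 : ℝ) ^ (j - 1) * ((2 * m).choose (m + j) : ℝ)
      = ∑ i ∈ range m, (-1 : ℝ) ^ i * ((2 * m).choose (m + (i + 1)) : ℝ) := by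
    refine Finset.sum_nbij' (i := fun j => j - 1) (j := fun i => i + 1) ?_ ?_ ?_ ?_ ?_ <;>
      intro a ha <;> simp only [mem_Icc, mem_range] at * <;> try omega
    rw [show a - 1 + 1 = a by omega]
  rw [hre]
  have pascal : ∀ i : ℕ, ((2 * m).choose (m + (i + 1)) : ℝ)
      = ((2 * m - 1).choose (m + i) : ℝ) + ((2 * m - 1).choose (m + i + 1) : ℝ) := by
    intro i
    have h1 : 2 * m = (2 * m - 1) + 1 := by omega
    rw [show m + (i+1) = (m+i)+1 from rfl, h1, Nat.choose_succ_succ']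
    push_cast; ring
  have step : ∀ i ∈ range m, (-1 : ℝ) ^ i * ((2 * m).choose (m + (i + 1)) : ℝ)
      = (fun i => (-1 : ℝ) ^ i * ((2 * m - 1).choose (m + i) : ℝ)) i
        - (fun i => (-1 : ℝ) ^ i * ((2 * m - 1).choose (m + i) : ℝ)) (i + 1) := by
    intro i _
    simp only [pascal i, pow_succ]
    ring
  rw [Finset.sum_congr rfl step, Finset.sum_range_sub']
  have hz : (2 * m - 1).choose (m + m) = 0 := Nat.choose_eq_zero_of_lt (by omega)
  simp [hz]

lemma part1 (m : ℕ) (hm : 1 ≤ m) :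
    (∑ j ∈ Finset.Icc 1 m, altGamma m j * (j : ℝ)) = 1 := by
  have hC : ((2 * m).choose m : ℝ) ≠ 0 := by
    exact_mod_cast (Nat.choose_pos (by omega)).ne'
  have hterm : ∀ j ∈ Icc 1 m, altGamma m j * (j : ℝ)
      = ((-1 : ℝ) ^ (j - 1) * ((2 * m).choose (m + j) : ℝ)) * (2 / ((2 * m).choose m : ℝ)) := by
    intro j hj
    simp only [mem_Icc] at hj
    have hj0 : (j : ℝ) ≠ 0 := by exact_mod_cast (by omega : j ≠ 0)
    rw [altGamma]
    field_simp
  rw [Finset.sum_congr rfl hterm, ← Finset.sum_mul, key_alt_sum m hm]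
  have hc2 : ((2 * m).choose m : ℝ) = 2 * ((2 * m - 1).choose m : ℝ) := by
    exact_mod_cast congrArg (Nat.cast (R := ℝ)) (choose_central_eq m hm)
  have hC1 : ((2 * m - 1).choose m : ℝ) ≠ 0 := by
    exact_mod_cast (Nat.choose_pos (by omega)).ne'
  rw [hc2]
  field_simp
open Finset

lemma count_lemma (m : ℕ) :
    ((Icc 1 m).filter (fun r => (m - r) % 2 = 1)).card = m / 2 := by
  have : ((Icc 1 m).filter (fun r => (m - r) % 2 = 1)).card = (Icc 1 (m / 2)).card := by
    refine Finset.card_nbij' (i := fun r => (m + 1 - r) / 2) (j := fun k => m + 1 - 2 * k)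
      ?_ ?_ ?_ ?_ <;> intro a ha <;>
      simp only [mem_coe, mem_filter, mem_Icc] at * <;> omega
  rw [this, Nat.card_Icc]
  omega

lemma sumT (a : ℕ → ℝ) (m : ℕ) :
    ∑ r ∈ Icc 1 m, ∑ β ∈ range ((m - r) / 2 + 1), a (r + 2 * β)
      = ∑ j ∈ Icc 1 m, a j * (((j + 1) / 2 : ℕ) : ℝ) := by
  induction m with
  | zero => simp
  | succ m ih =>
    rw [Finset.sum_Icc_succ_top (by omega), Finset.sum_Icc_succ_top (by omega)]
    have hlast : ∑ β ∈ range ((m + 1 - (m + 1)) / 2 + 1), a (m + 1 + 2 * β) = a (m + 1) := by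
      simp
    have hstep : ∀ r ∈ Icc 1 m,
        ∑ β ∈ range ((m + 1 - r) / 2 + 1), a (r + 2 * β)
          = (∑ β ∈ range ((m - r) / 2 + 1), a (r + 2 * β))
            + (if (m - r) % 2 = 1 then a (m + 1) else 0) := by
      intro r hr
      simp only [mem_Icc] at hr
      by_cases h : (m - r) % 2 = 1
      · rw [if_pos h, show (m + 1 - r) / 2 + 1 = ((m - r) / 2 + 1) + 1 by omega,
          Finset.sum_range_succ, show r + 2 * ((m - r) / 2 + 1) = m + 1 by omega]
      · rw [if_neg h, show (m + 1 - r) / 2 = (m - r) / 2 by omega, add_zero]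
    rw [Finset.sum_congr rfl hstep, Finset.sum_add_distrib, ih, hlast]
    have hcount : ∑ r ∈ Icc 1 m, (if (m - r) % 2 = 1 then a (m + 1) else 0)
        = (m / 2 : ℕ) * a (m + 1) := by
      rw [← Finset.sum_filter, Finset.sum_const, count_lemma, nsmul_eq_mul]
    rw [hcount, show ((m + 1 + 1) / 2 : ℕ) = m / 2 + 1 by omega]
    push_cast
    ring

lemma tau1_lemma (a : ℕ → ℝ) (m : ℕ) (hm : 1 ≤ m) :
    ∑ β ∈ range ((m - 1) / 2 + 1), a (1 + 2 * β)
      = ∑ j ∈ Icc 1 m, (if j % 2 = 1 then a j else 0) := by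
  rw [← Finset.sum_filter]
  refine Finset.sum_nbij' (i := fun β => 1 + 2 * β) (j := fun j => (j - 1) / 2)
    ?_ ?_ ?_ ?_ ?_ <;> intro b hb <;>
    simp only [mem_filter, mem_Icc, mem_range] at * <;> omega

lemma sum_abs (G : ℕ → ℝ) (n : ℕ) :
    ∑ α ∈ Icc (-(n : ℤ)) (n : ℤ), G α.natAbs = G 0 + 2 * ∑ i ∈ Icc 1 n, G i := by
  induction n with
  | zero => simp
  | succ n ih =>
    have hset : Icc (-((n + 1 : ℕ) : ℤ)) ((n + 1 : ℕ) : ℤ)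
        = insert (-((n + 1 : ℕ) : ℤ)) (insert ((n + 1 : ℕ) : ℤ) (Icc (-(n : ℤ)) (n : ℤ))) := by
      ext x
      simp only [mem_Icc, mem_insert]
      push_cast
      omega
    rw [hset, Finset.sum_insert (by simp only [mem_insert, mem_Icc]; push_cast; omega),
      Finset.sum_insert (by simp only [mem_Icc]; push_cast; omega), ih,
      Finset.sum_Icc_succ_top (by omega)]
    have h1 : ((-((n + 1 : ℕ) : ℤ)).natAbs) = n + 1 := by omega
    have h2 : (((n + 1 : ℕ) : ℤ).natAbs) = n + 1 := by omega
    rw [h1, h2]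
    ring
/-- The coefficients of the integrals in the Alt approximation sum to `1`, in both forms:
`∑_{j=1}^m γ_{m,j}·j = 1` and `∑_{α=1−m}^{m−1} τ_{m,1+|α|} = 1`. -/
theorem alt_coeffs_sum_to_one (m : ℕ) (hm : 1 ≤ m) :
    (∑ j ∈ Finset.Icc 1 m, altGamma m j * (j : ℝ)) = 1 ∧
    (∑ α ∈ Finset.Icc (1 - (m : ℤ)) ((m : ℤ) - 1), altTau m (1 + α.natAbs)) = 1 := by
  refine ⟨part1 m hm, ?_⟩
  set a : ℕ → ℝ := fun j => altGamma m j with ha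
  -- rewrite the index set bounds
  have hb1 : (1 - (m : ℤ)) = -(((m - 1 : ℕ) : ℤ)) := by omega
  have hb2 : ((m : ℤ) - 1) = ((m - 1 : ℕ) : ℤ) := by omega
  rw [hb1, hb2, sum_abs (fun i => altTau m (1 + i)) (m - 1)]
  -- turn the shifted sum into a sum over Icc 2 m
  have h5 : ∑ i ∈ Icc 1 (m - 1), altTau m (1 + i) = ∑ r ∈ Icc 2 m, altTau m r := by
    refine Finset.sum_nbij' (i := fun i => 1 + i) (j := fun r => r - 1) ?_ ?_ ?_ ?_ ?_ <;>
      intro b hb <;> simp only [mem_Icc] at * <;> omega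
  have h6 : ∑ r ∈ Icc 1 m, altTau m r = altTau m 1 + ∑ r ∈ Icc 2 m, altTau m r := by
    have hins : Icc 1 m = insert 1 (Icc 2 m) := by
      ext x; simp only [mem_Icc, mem_insert]; omega
    rw [hins, Finset.sum_insert (by simp)]
  rw [h5, show (1 + 0 : ℕ) = 1 from rfl]
  have hgoal : altTau m 1 + 2 * (∑ r ∈ Icc 2 m, altTau m r)
      = 2 * (∑ r ∈ Icc 1 m, altTau m r) - altTau m 1 := by rw [h6]; ring
  rw [hgoal]
  have hT : ∑ r ∈ Icc 1 m, altTau m r = ∑ j ∈ Icc 1 m, a j * (((j + 1) / 2 : ℕ) : ℝ) := by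
    simp only [altTau]
    exact sumT a m
  have ht1 : altTau m 1 = ∑ j ∈ Icc 1 m, (if j % 2 = 1 then a j else 0) := by
    rw [altTau]
    exact tau1_lemma a m hm
  rw [hT, ht1, Finset.mul_sum, ← Finset.sum_sub_distrib]
  have hterm : ∀ j ∈ Icc 1 m,
      2 * (a j * (((j + 1) / 2 : ℕ) : ℝ)) - (if j % 2 = 1 then a j else 0) = a j * j := by
    intro j hj
    simp only [mem_Icc] at hj
    by_cases h : j % 2 = 1
    · obtain ⟨k, rfl⟩ : ∃ k, j = 2 * k + 1 := ⟨j / 2, by omega⟩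
      rw [if_pos h, show (2 * k + 1 + 1) / 2 = k + 1 by omega]
      push_cast; ring
    · obtain ⟨k, rfl⟩ : ∃ k, j = 2 * k := ⟨j / 2, by omega⟩
      rw [if_neg h, show (2 * k + 1) / 2 = k by omega]
      push_cast; ring
  rw [Finset.sum_congr rfl hterm]
  exact part1 m hm
end

section
/- For every integer m ≥ 1 and every odd integer q with 1 ≤ q ≤ 2m−1, one has ∑_{j=1}^{m} γ_{m,j} · j^q = 1 if q = 1 and ∑_{j=1}^{m} γ_{m,j} · j^q = 0 if q ∈ {3, 5, …, 2m−1}. -/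
open Finset

lemma altA (s : ℕ) : ∀ n, s < n →
    ∑ k ∈ Finset.range (n+1), (-1:ℝ)^k * (n.choose k : ℝ) * (k:ℝ)^s = 0 := by
  induction s using Nat.strong_induction_on with
  | _ s IH =>
    intro n hn
    obtain ⟨p, rfl⟩ : ∃ p, n = p + 1 := ⟨n-1, by omega⟩
    match s with
    | 0 =>
      have h := Int.alternating_sum_range_choose (n := p+1)
      rw [if_neg (by omega)] at h
      have h2 : ((∑ i ∈ range (p+1+1), ((-1)^i * ((p+1).choose i) : ℤ) : ℤ) : ℝ) = 0 := by
        rw [h]; norm_num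
      push_cast at h2
      simpa using h2
    | t+1 =>
      have key : ∀ i ∈ range (p+1),
          (-1:ℝ)^(i+1) * ((p+1).choose (i+1) : ℝ) * (((i+1 : ℕ)):ℝ)^(t+1)
          = ∑ u ∈ range (t+1), (-((p:ℝ)+1) * (t.choose u)) * ((-1)^i * (p.choose i : ℝ) * (i:ℝ)^u) := by
        intro i _
        have hc : (((p+1).choose (i+1) : ℝ)) * ((i:ℝ)+1) = ((p:ℝ)+1) * (p.choose i : ℝ) := by
          exact_mod_cast congrArg (Nat.cast : ℕ → ℝ) (Nat.add_one_mul_choose_eq p i).symm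
        have hb : ((i:ℝ)+1)^t = ∑ u ∈ range (t+1), (i:ℝ)^u * (t.choose u : ℝ) := by
          have := add_pow (i:ℝ) 1 t
          simpa using this
        push_cast
        have hp : ((i:ℝ)+1)^(t+1) = (∑ u ∈ range (t+1), (i:ℝ)^u * (t.choose u : ℝ)) * ((i:ℝ)+1) := by
          rw [pow_succ, hb]
        rw [hp, Finset.sum_mul, Finset.mul_sum]
        refine Finset.sum_congr rfl fun u _ => ?_
        linear_combination (-(-1:ℝ)^i * (i:ℝ)^u * (t.choose u:ℝ)) * hc
      rw [Finset.sum_range_succ', Finset.sum_congr rfl key, Finset.sum_comm]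
      have hz : ∀ u ∈ range (t+1),
          ∑ i ∈ range (p+1), (-((p:ℝ)+1) * (t.choose u)) * ((-1)^i * (p.choose i : ℝ) * (i:ℝ)^u) = 0 := by
        intro u hu
        simp only [Finset.mem_range] at hu
        rw [← Finset.mul_sum, IH u (by omega) p (by omega), mul_zero]
      rw [Finset.sum_congr rfl hz]
      simp

lemma altA' (s n : ℕ) (c : ℝ) (hn : s < n) :
    ∑ k ∈ Finset.range (n+1), (-1:ℝ)^k * (n.choose k : ℝ) * ((k:ℝ) - c)^s = 0 := by
  have key : ∀ k ∈ range (n+1),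
      (-1:ℝ)^k * (n.choose k : ℝ) * ((k:ℝ) - c)^s
      = ∑ u ∈ range (s+1), ((-c)^(s-u) * (s.choose u : ℝ)) * ((-1)^k * (n.choose k : ℝ) * (k:ℝ)^u) := by
    intro k _
    have hb : ((k:ℝ) - c)^s = ∑ u ∈ range (s+1), (k:ℝ)^u * (-c)^(s-u) * (s.choose u : ℝ) := by
      have := add_pow (k:ℝ) (-c) s
      rw [← this]; ring_nf
    rw [hb, Finset.mul_sum]
    exact Finset.sum_congr rfl fun u _ => by ring
  rw [Finset.sum_congr rfl key, Finset.sum_comm]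
  have hz : ∀ u ∈ range (s+1),
      ∑ k ∈ range (n+1), ((-c)^(s-u) * (s.choose u : ℝ)) * ((-1)^k * (n.choose k : ℝ) * (k:ℝ)^u) = 0 := by
    intro u hu
    simp only [Finset.mem_range] at hu
    rw [← Finset.mul_sum, altA u n (by omega), mul_zero]
  rw [Finset.sum_congr rfl hz]
  simp

lemma altK (m s : ℕ) (hm : 1 ≤ m) (hs : Even s) (hsm : s < 2*m) :
    ∑ j ∈ Finset.Icc 1 m, (-1:ℝ)^(j-1) * 2 * (j:ℝ)^s * ((2*m).choose (m+j) : ℝ)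
      = (if s = 0 then 1 else 0) * ((2*m).choose m : ℝ) := by
  set f : ℕ → ℝ := fun k => (-1:ℝ)^k * ((2*m).choose k : ℝ) * ((k:ℝ) - m)^s with hf
  have hS : ∑ k ∈ Finset.range (2*m+1), f k = 0 := altA' s (2*m) m hsm
  -- pairing
  have hpair : ∀ j ∈ Finset.Icc 1 m, f (m - j) = f (m + j) := by
    intro j hj
    simp only [Finset.mem_Icc] at hj
    have h1 : ((m - j : ℕ) : ℝ) = (m:ℝ) - j := by
      rw [Nat.cast_sub hj.2]
    have h2 : (-1:ℝ)^(m - j) = (-1:ℝ)^(m + j) := by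
      rw [show m + j = (m - j) + 2*j from by omega, pow_add, pow_mul]
      norm_num
    have h3 : (2*m).choose (m - j) = (2*m).choose (m + j) := by
      rw [show m - j = 2*m - (m+j) from by omega, Nat.choose_symm (by omega)]
    simp only [hf, h1, h2, h3]
    push_cast
    have h4 : ((m:ℝ) - j - m)^s = ((m:ℝ) + j - m)^s := by
      rw [show (m:ℝ) - j - m = -((m:ℝ) + j - m) from by ring, hs.neg_pow]
    rw [h4]
  have h1 : ∑ k ∈ Finset.range m, f k = ∑ j ∈ Finset.Icc 1 m, f (m + j) := by
    rw [← Finset.sum_congr rfl hpair]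
    rw [← Finset.Ico_add_one_right_eq_Icc, Finset.sum_Ico_eq_sum_range]
    simp only [show m + 1 - 1 = m from by omega]
    rw [← Finset.sum_range_reflect]
    exact Finset.sum_congr rfl fun i hi => by
      simp only [Finset.mem_range] at hi
      congr 1
      omega
  have h2 : ∑ k ∈ Finset.range (m+1), f (m + k) = f m + ∑ j ∈ Finset.Icc 1 m, f (m + j) := by
    rw [Finset.sum_range_succ']
    rw [← Finset.Ico_add_one_right_eq_Icc, Finset.sum_Ico_eq_sum_range]
    simp only [show m + 1 - 1 = m from by omega, add_zero]
    rw [add_comm]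
    congr 1
    exact Finset.sum_congr rfl fun i _ => by congr 1; omega
  have hsplit : ∑ k ∈ Finset.range (2*m+1), f k
      = ∑ k ∈ Finset.range m, f k + ∑ k ∈ Finset.range (m+1), f (m + k) := by
    rw [show 2*m+1 = m + (m+1) from by omega, Finset.sum_range_add]
  rw [hsplit, h1, h2] at hS
  -- now hS : ∑ + (f m + ∑) = 0
  have hsum : ∑ j ∈ Finset.Icc 1 m, f (m + j) = -(f m) / 2 := by linarith
  have hgoal : ∀ j ∈ Finset.Icc 1 m,
      (-1:ℝ)^(j-1) * 2 * (j:ℝ)^s * ((2*m).choose (m+j) : ℝ) = (-2 * (-1:ℝ)^m) * f (m + j) := by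
    intro j hj
    simp only [Finset.mem_Icc] at hj
    have hjs : (-1:ℝ)^(j-1) = -(-1:ℝ)^j := by
      rw [show j = (j-1) + 1 from by omega, pow_succ]
      simp [show j - 1 + 1 - 1 = j - 1 from by omega]
    have hmj : (-1:ℝ)^(m+j) = (-1:ℝ)^m * (-1:ℝ)^j := pow_add _ _ _
    have hc : (((m + j : ℕ)):ℝ) - m = (j:ℝ) := by push_cast; ring
    simp only [hf, hmj, hc, hjs]
    have : ((-1:ℝ)^m)^2 = 1 := by
      rw [← pow_mul, pow_mul']
      norm_num
    linear_combination (2*(-1:ℝ)^j * (((2*m).choose (m+j)):ℝ) * (j:ℝ)^s) * this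
  rw [Finset.sum_congr rfl hgoal, ← Finset.mul_sum, hsum]
  have hfm : f m = (-1:ℝ)^m * ((2*m).choose m : ℝ) * (0:ℝ)^s := by
    simp only [hf]
    congr 1
    rw [sub_self]
  rw [hfm]
  have hsq : ((-1:ℝ)^m)^2 = 1 := by
    rw [← pow_mul, pow_mul']
    norm_num
  rcases Nat.eq_zero_or_pos s with h | h
  · subst h; simp; nlinarith [hsq]
  · rw [if_neg (by omega), zero_pow (by omega)]
    ring



/-- For every odd `q` with `1 ≤ q ≤ 2m−1`, one has
`∑_{j=1}^m γ_{m,j}·j^q = 1` if `q = 1` and `= 0` if `q ∈ {3,5,…,2m−1}`. -/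
theorem alt_gamma_odd_moments (m q : ℕ) (hm : 1 ≤ m) (hq : Odd q)
    (hq1 : 1 ≤ q) (hq2 : q ≤ 2 * m - 1) :
    ∑ j ∈ Finset.Icc 1 m, altGamma m j * (j : ℝ) ^ q = if q = 1 then 1 else 0 := by
  obtain ⟨s, rfl⟩ : ∃ s, q = s + 1 := ⟨q-1, by omega⟩
  have hse : Even s := by
    obtain ⟨k, hk⟩ := hq
    exact ⟨k, by omega⟩
  have hslt : s < 2*m := by omega
  have hD : ((2*m).choose m : ℝ) ≠ 0 := by
    have := Nat.choose_pos (show m ≤ 2*m by omega)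
    exact_mod_cast this.ne'
  have hterm : ∀ j ∈ Finset.Icc 1 m, altGamma m j * (j:ℝ)^(s+1)
      = ((-1:ℝ)^(j-1) * 2 * (j:ℝ)^s * ((2*m).choose (m+j) : ℝ)) / ((2*m).choose m : ℝ) := by
    intro j hj
    simp only [Finset.mem_Icc] at hj
    have hj0 : (j:ℝ) ≠ 0 := Nat.cast_ne_zero.mpr (by omega)
    unfold altGamma
    field_simp
    ring
  rw [Finset.sum_congr rfl hterm, ← Finset.sum_div, altK m s hm hse hslt]
  rcases Nat.eq_zero_or_pos s with h | h
  · subst h; simp [hD]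
  · rw [if_neg (by omega), if_neg (by omega), zero_mul, zero_div]
end

section
/- Let n be a nonnegative integer, m ≥ 1 an integer, and f : ℝ → ℝ a 2m-times continuously differentiable function. If M ≥ 0 is a real number such that |∑_{k=0}^{n−1} f^{(2m)}(k+w)| ≤ M for all w ∈ [−m/2, m/2], then |R_m| ≤ (M/((2m+1)!·2^{2m})) · ∑_{j=1}^{m} |γ_{m,j}| · j^{2m+1}. -/
/-- Bound on the Alt remainder: if `|∑_{k=0}^{n−1} f^{(2m)}(k+w)| ≤ M` for all
`w ∈ [−m/2, m/2]`, then `|R_m| ≤ (M/((2m+1)!·2^{2m})) · ∑_{j=1}^m |γ_{m,j}|·j^{2m+1}`. -/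
theorem alt_remainder_bound (n m : ℕ) (hm : 1 ≤ m) (f : ℝ → ℝ)
    (hf : ContDiff ℝ (2 * m) f) (M : ℝ) (hM : 0 ≤ M)
    (hbound : ∀ w ∈ Set.Icc (-(m : ℝ) / 2) ((m : ℝ) / 2),
      |∑ k ∈ Finset.range n, iteratedDeriv (2 * m) f ((k : ℝ) + w)| ≤ M) :
    |altR m n f| ≤ M / (((2 * m + 1).factorial : ℝ) * 2 ^ (2 * m)) *
      ∑ j ∈ Finset.Icc 1 m, |altGamma m j| * (j : ℝ) ^ (2 * m + 1) := by
  have hD : Continuous (iteratedDeriv (2 * m) f) :=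
    hf.continuous_iteratedDeriv (2 * m) le_rfl
  set G : ℝ → ℝ → ℝ := fun s v => v ^ (2 * m) *
      ∑ j ∈ Finset.Icc 1 m, altGamma m j * (j : ℝ) ^ (2 * m + 1) *
        ∑ k ∈ Finset.range n, iteratedDeriv (2 * m) f ((k : ℝ) + (j : ℝ) * s * v / 2)
    with hGdef
  set Sg : ℝ := ∑ j ∈ Finset.Icc 1 m, |altGamma m j| * (j : ℝ) ^ (2 * m + 1) with hSgdef
  have hSgnn : 0 ≤ Sg := Finset.sum_nonneg fun j _ => mul_nonneg (abs_nonneg _) (by positivity)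
  set C : ℝ := M * Sg with hCdef
  have hCnn : 0 ≤ C := mul_nonneg hM hSgnn
  have hcont : Continuous (Function.uncurry G) := by
    apply Continuous.mul (by fun_prop)
    apply continuous_finset_sum; intro j _
    apply Continuous.mul continuous_const
    apply continuous_finset_sum; intro k _
    exact hD.comp (by fun_prop)
  have hGcont : ∀ s : ℝ, Continuous (G s) := fun s =>
    hcont.comp (Continuous.prodMk_right s)
  -- pointwise bound
  have hGb : ∀ s ∈ Set.Icc (0:ℝ) 1, ∀ v ∈ Set.Icc (-1:ℝ) 1, |G s v| ≤ v ^ (2*m) * C := by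
    intro s hs v hv
    have hvp : (0:ℝ) ≤ v ^ (2*m) := (even_two_mul m).pow_nonneg v
    have hsum : |∑ j ∈ Finset.Icc 1 m, altGamma m j * (j : ℝ) ^ (2 * m + 1) *
        ∑ k ∈ Finset.range n, iteratedDeriv (2 * m) f ((k : ℝ) + (j : ℝ) * s * v / 2)| ≤ C := by
      refine (Finset.abs_sum_le_sum_abs _ _).trans ?_
      have : ∀ j ∈ Finset.Icc 1 m,
          |altGamma m j * (j : ℝ) ^ (2 * m + 1) *
            ∑ k ∈ Finset.range n, iteratedDeriv (2 * m) f ((k : ℝ) + (j : ℝ) * s * v / 2)|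
          ≤ |altGamma m j| * (j : ℝ) ^ (2 * m + 1) * M := by
        intro j hj
        have hjm : (j : ℝ) ≤ m := by
          exact_mod_cast (Finset.mem_Icc.1 hj).2
        have hj0 : (0:ℝ) ≤ j := Nat.cast_nonneg j
        have hS : |∑ k ∈ Finset.range n, iteratedDeriv (2 * m) f
            ((k : ℝ) + (j : ℝ) * s * v / 2)| ≤ M := by
          apply hbound
          have hs0 := hs.1; have hs1 := hs.2
          have hv1 : |v| ≤ 1 := abs_le.2 ⟨hv.1, hv.2⟩
          have habs : |(j : ℝ) * s * v / 2| ≤ (m:ℝ)/2 := by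
            rw [abs_div, abs_mul, abs_mul]
            have : |(j:ℝ)| * |s| * |v| ≤ (m:ℝ) := by
              have h1 : |(j:ℝ)| = j := abs_of_nonneg hj0
              have h2 : |s| = s := abs_of_nonneg hs0
              rw [h1, h2]
              have t1 : (j:ℝ)*s ≤ j := mul_le_of_le_one_right hj0 hs1
              have t2 : (j:ℝ)*s*|v| ≤ (j:ℝ)*s :=
                mul_le_of_le_one_right (mul_nonneg hj0 hs0) hv1
              linarith
            simp only [abs_two]
            linarith
          constructor
          · have := (abs_le.1 habs).1; linarith
          · exact (abs_le.1 habs).2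
        rw [abs_mul, abs_mul, abs_pow, abs_of_nonneg hj0]
        exact mul_le_mul_of_nonneg_left hS (by positivity)
      refine (Finset.sum_le_sum this).trans_eq ?_
      rw [hCdef, hSgdef, Finset.mul_sum]
      exact Finset.sum_congr rfl fun i _ => by ring
    rw [hGdef, abs_mul, abs_pow, (even_two_mul m).pow_abs]
    exact mul_le_mul_of_nonneg_left hsum hvp
  -- inner integral bound
  have hIval : (∫ v in (-1:ℝ)..1, v ^ (2*m) * C) = 2 / (2*m+1) * C := by
    rw [intervalIntegral.integral_mul_const, integral_pow]
    have h1 : ((-1:ℝ)) ^ (2*m+1) = -1 := (Odd.neg_one_pow ⟨m, by ring⟩)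
    rw [one_pow, h1]
    push_cast; ring
  have hIb : ∀ s ∈ Set.Icc (0:ℝ) 1, |∫ v in (-1:ℝ)..1, G s v| ≤ 2 / (2*m+1) * C := by
    intro s hs
    have h1 : |∫ v in (-1:ℝ)..1, G s v| ≤ ∫ v in (-1:ℝ)..1, |G s v| :=
      intervalIntegral.abs_integral_le_integral_abs (by norm_num)
    have h2 : (∫ v in (-1:ℝ)..1, |G s v|) ≤ ∫ v in (-1:ℝ)..1, v ^ (2*m) * C := by
      apply intervalIntegral.integral_mono_on (by norm_num)
      · exact ((hGcont s).abs).intervalIntegrable _ _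
      · exact (Continuous.intervalIntegrable (by fun_prop) _ _)
      · exact hGb s hs
    linarith [hIval ▸ h2]
  -- outer
  set I : ℝ → ℝ := fun s => ∫ v in (-1:ℝ)..1, G s v with hIdef
  have hIcont : Continuous I :=
    intervalIntegral.continuous_parametric_intervalIntegral_of_continuous' hcont (-1) 1
  have houter : |∫ s in (0:ℝ)..1, (1 - s) ^ (2*m-1) * I s|
      ≤ 2 / (2*m+1) * C * (1 / (2*m)) := by
    have h1 : |∫ s in (0:ℝ)..1, (1 - s) ^ (2*m-1) * I s| ≤
        ∫ s in (0:ℝ)..1, |(1 - s) ^ (2*m-1) * I s| :=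
      intervalIntegral.abs_integral_le_integral_abs (by norm_num)
    have h2 : (∫ s in (0:ℝ)..1, |(1 - s) ^ (2*m-1) * I s|) ≤
        ∫ s in (0:ℝ)..1, (1 - s) ^ (2*m-1) * (2 / (2*m+1) * C) := by
      apply intervalIntegral.integral_mono_on (by norm_num)
      · exact (Continuous.abs (by fun_prop)).intervalIntegrable _ _
      · exact Continuous.intervalIntegrable (by fun_prop) _ _
      · intro s hs
        rw [abs_mul, abs_pow, abs_of_nonneg (by linarith [hs.2] : (0:ℝ) ≤ 1 - s)]
        exact mul_le_mul_of_nonneg_left (hIb s hs)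
          (pow_nonneg (by linarith [hs.2] : (0:ℝ) ≤ 1 - s) _)
    have h3 : (∫ s in (0:ℝ)..1, (1 - s) ^ (2*m-1) * (2 / (2*m+1) * C))
        = (1 / (2*m)) * (2 / (2*m+1) * C) := by
      rw [intervalIntegral.integral_mul_const]
      have h4 : (∫ s in (0:ℝ)..1, (1 - s) ^ (2*m-1)) = 1 / (2*m) := by
        have := intervalIntegral.integral_comp_sub_left (a := (0:ℝ)) (b := 1)
          (fun x => x ^ (2*m-1)) 1
        simp only [sub_self, sub_zero] at this
        rw [this, integral_pow]
        have hme : 2*m - 1 + 1 = 2*m := by omega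
        have hc : ((2*m-1 : ℕ) : ℝ) + 1 = 2*(m:ℝ) := by exact_mod_cast hme
        rw [hc, one_pow, zero_pow (by omega : 2*m - 1 + 1 ≠ 0)]
        norm_num
      rw [h4]
    calc |∫ s in (0:ℝ)..1, (1 - s) ^ (2*m-1) * I s| ≤ _ := h1
      _ ≤ _ := h2
      _ = (1 / (2*m)) * (2 / (2*m+1) * C) := h3
      _ = 2 / (2*m+1) * C * (1 / (2*m)) := by ring
  -- assemble
  have hfac : ((2*m+1).factorial : ℝ) = (2*m+1) * (2*m) * ((2*m-1).factorial : ℝ) := by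
    have h1 : 2*m - 1 + 1 = 2*m := by omega
    rw [Nat.factorial_succ, ← h1, Nat.factorial_succ, h1]
    push_cast [h1]; ring
  have hfacpos : (0:ℝ) < ((2*m-1).factorial : ℝ) := by exact_mod_cast (2*m-1).factorial_pos
  have hmR : (0:ℝ) < (m:ℝ) := by exact_mod_cast hm
  rw [altR, abs_mul]
  have hc0 : |1 / (((2 * m - 1).factorial : ℝ) * 2 ^ (2 * m + 1))|
      = 1 / (((2 * m - 1).factorial : ℝ) * 2 ^ (2 * m + 1)) := by
    rw [abs_of_nonneg]; positivity
  rw [hc0]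
  have := houter
  calc 1 / (((2 * m - 1).factorial : ℝ) * 2 ^ (2 * m + 1)) *
        |∫ s in (0:ℝ)..1, (1 - s) ^ (2*m-1) * I s|
      ≤ 1 / (((2 * m - 1).factorial : ℝ) * 2 ^ (2 * m + 1)) *
        (2 / (2*m+1) * C * (1 / (2*m))) := by
        apply mul_le_mul_of_nonneg_left this (by positivity)
    _ = M / (((2 * m + 1).factorial : ℝ) * 2 ^ (2 * m)) * Sg := by
        rw [hfac, hCdef]
        have h2m : (0:ℝ) < 2*(m:ℝ) := by linarith
        field_simp
        ring
end

section
/- Let m ≥ 1 be an integer and p an integer with 0 ≤ p ≤ 2m−1. Then the p-th Bernoulli number satisfies B_p = ∑_{j=1}^{m} γ_{m,j} ∑_{i=0}^{j−1} (j/2 − i − 1)^p = (1/2^p) · (τ_{m,1}·(−1)^p + ∑_{β=2}^{m} τ_{m,β} · ((β−2)^p + (−β)^p)), with the convention 0^0 := 1. -/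
open Finset PowerSeries


lemma alt_pascal (n : ℕ) (f : ℕ → ℝ) :
    ∑ i ∈ range (n + 2), (-1 : ℝ) ^ i * ((n + 1).choose i : ℝ) * f i =
      ∑ i ∈ range (n + 1), (-1 : ℝ) ^ i * (n.choose i : ℝ) * (f i - f (i + 1)) := by
  have hL := Finset.sum_range_succ' (fun i => (-1 : ℝ) ^ i * ((n + 1).choose i : ℝ) * f i) (n + 1)
  have hsh := Finset.sum_range_succ' (fun i => (-1 : ℝ) ^ i * (n.choose i : ℝ) * f i) (n + 1)
  have hlast : (-1 : ℝ) ^ (n+1) * (n.choose (n+1) : ℝ) * f (n+1) = 0 := by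
    simp [Nat.choose_succ_self]
  rw [hL]
  have hsplit : ∀ i, (-1 : ℝ) ^ (i+1) * ((n + 1).choose (i+1) : ℝ) * f (i+1)
      = -((-1 : ℝ) ^ i * (n.choose i : ℝ) * f (i+1))
        + (-1 : ℝ) ^ (i+1) * (n.choose (i+1) : ℝ) * f (i+1) := by
    intro i
    rw [Nat.choose_succ_succ]
    push_cast
    ring
  simp only [hsplit]
  rw [Finset.sum_add_distrib]
  have h2 : ∑ i ∈ range (n + 1), (-1 : ℝ) ^ (i+1) * (n.choose (i+1) : ℝ) * f (i+1)
      = ∑ i ∈ range (n + 1), (-1 : ℝ) ^ i * (n.choose i : ℝ) * f i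
        - (-1 : ℝ) ^ 0 * (n.choose 0 : ℝ) * f 0 := by
    have := Finset.sum_range_succ (fun i => (-1 : ℝ) ^ i * (n.choose i : ℝ) * f i) (n+1)
    rw [hsh] at this
    rw [hlast] at this
    linarith [this]
  rw [h2]
  simp only [mul_sub, Finset.sum_sub_distrib, Finset.sum_neg_distrib,
    Nat.choose_zero_right, Nat.cast_one]
  ring

lemma alt_vanish : ∀ (e : ℕ) (n : ℕ), e < n →
    ∑ i ∈ range (n + 1), (-1 : ℝ) ^ i * (n.choose i : ℝ) * (i : ℝ) ^ e = 0 := by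
  intro e
  induction e using Nat.strong_induction_on with
  | _ e IH =>
    intro n hen
    obtain ⟨n', rfl⟩ : ∃ n', n = n' + 1 := ⟨n - 1, by omega⟩
    have key : ∑ i ∈ range (n' + 2), (-1 : ℝ) ^ i * ((n' + 1).choose i : ℝ) * (i : ℝ) ^ e
        = ∑ i ∈ range (n' + 1), (-1 : ℝ) ^ i * (n'.choose i : ℝ) * ((i : ℝ) ^ e - ((i:ℝ) + 1) ^ e) := by
      have := alt_pascal n' (fun i => (i : ℝ) ^ e)
      push_cast at this ⊢
      convert this using 2
    rw [show n' + 1 + 1 = n' + 2 from rfl, key]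
    have hexp : ∀ i : ℕ, (i : ℝ) ^ e - ((i:ℝ) + 1) ^ e
        = -∑ d ∈ range e, (i : ℝ) ^ d * (e.choose d : ℝ) := by
      intro i
      have h := add_pow (i : ℝ) 1 e
      simp only [one_pow, mul_one] at h
      rw [h, Finset.sum_range_succ, Nat.choose_self]
      push_cast
      ring
    simp only [hexp, mul_neg, Finset.mul_sum, Finset.sum_neg_distrib]
    rw [neg_eq_zero, Finset.sum_comm]
    apply Finset.sum_eq_zero
    intro d hd
    have hd' : d < e := mem_range.mp hd
    have h0 := IH d hd' n' (by omega)
    have : ∑ i ∈ range (n'+1), (-1:ℝ)^i * (n'.choose i : ℝ) * ((i:ℝ)^d * (e.choose d : ℝ))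
        = (∑ i ∈ range (n'+1), (-1:ℝ)^i * (n'.choose i : ℝ) * (i:ℝ)^d) * (e.choose d : ℝ) := by
      rw [Finset.sum_mul]; exact Finset.sum_congr rfl fun i _ => by ring
    rw [this, h0, zero_mul]

lemma alt_vanish_shift (e n : ℕ) (h : e < n) (c : ℝ) :
    ∑ i ∈ range (n + 1), (-1 : ℝ) ^ i * (n.choose i : ℝ) * ((i : ℝ) + c) ^ e = 0 := by
  have hexp : ∀ i : ℕ, ((i : ℝ) + c) ^ e
      = ∑ d ∈ range (e + 1), (i : ℝ) ^ d * c ^ (e - d) * (e.choose d : ℝ) :=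
    fun i => add_pow (i : ℝ) c e
  simp only [hexp, Finset.mul_sum]
  rw [Finset.sum_comm]
  apply Finset.sum_eq_zero
  intro d hd
  have hd' : d ≤ e := Nat.lt_succ_iff.mp (mem_range.mp hd)
  have h0 := alt_vanish d n (lt_of_le_of_lt hd' h)
  have : ∑ i ∈ range (n+1), (-1:ℝ)^i * (n.choose i : ℝ) * ((i:ℝ)^d * c ^ (e-d) * (e.choose d : ℝ))
      = (∑ i ∈ range (n+1), (-1:ℝ)^i * (n.choose i : ℝ) * (i:ℝ)^d) * (c ^ (e-d) * (e.choose d : ℝ)) := by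
    rw [Finset.sum_mul]; exact Finset.sum_congr rfl fun i _ => by ring
  rw [this, h0, zero_mul]

lemma alt_halfrow (m e : ℕ) (hm : 1 ≤ m) (he : Even e) (helt : e < 2 * m) :
    ∑ j ∈ Icc 1 m, (-1 : ℝ) ^ (j - 1) * ((2 * m).choose (m + j) : ℝ) * (j : ℝ) ^ e
      = if e = 0 then ((2 * m).choose m : ℝ) / 2 else 0 := by
  have h0 := alt_vanish_shift e (2 * m) helt (-(m : ℝ))
  set g : ℕ → ℝ := fun i => (-1 : ℝ) ^ i * ((2*m).choose i : ℝ) * ((i : ℝ) + -(m:ℝ)) ^ e with hg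
  have hsplit : ∑ i ∈ range (2 * m + 1), g i
      = (∑ i ∈ range m, g i) + g m + ∑ k ∈ range m, g (m + 1 + k) := by
    have h1 : ∑ i ∈ range (2*m+1), g i = ∑ i ∈ range (m+1), g i + ∑ k ∈ range m, g (m+1+k) := by
      rw [Finset.range_eq_Ico,
        ← Finset.sum_Ico_consecutive g (by omega : 0 ≤ m + 1) (by omega : m + 1 ≤ 2 * m + 1)]
      congr 1
      · rw [Finset.range_eq_Ico]
      rw [Finset.sum_Ico_eq_sum_range, show 2*m+1-(m+1) = m by omega, Finset.range_eq_Ico]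
    rw [h1, Finset.sum_range_succ]
  have hrefl : ∑ i ∈ range m, g i = ∑ k ∈ range m, g (m - 1 - k) :=
    (Finset.sum_range_reflect g m).symm
  have hpair : ∀ k ∈ range m, g (m - 1 - k) + g (m + 1 + k)
      = 2 * ((-1 : ℝ) ^ (m + 1) * ((-1:ℝ)^k * ((2*m).choose (m + 1 + k) : ℝ) * ((k:ℝ) + 1) ^ e)) := by
    intro k hk
    have hk' : k < m := mem_range.mp hk
    have hch : (2*m).choose (m - 1 - k) = (2*m).choose (m + 1 + k) := by
      rw [show m - 1 - k = 2*m - (m+1+k) by omega, Nat.choose_symm (by omega)]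
    have hsgn : (-1 : ℝ) ^ (m - 1 - k) = (-1 : ℝ) ^ (m + 1 + k) := by
      rw [show m + 1 + k = (m - 1 - k) + 2 * (k + 1) by omega, pow_add, pow_mul, neg_one_sq,
        one_pow, mul_one]
    have hcast : ((m - 1 - k : ℕ) : ℝ) = (m : ℝ) - 1 - k := by
      rw [show m - 1 - k = m - (k+1) by omega, Nat.cast_sub (by omega)]
      push_cast; ring
    have hval1 : ((m - 1 - k : ℕ) : ℝ) + -(m:ℝ) = -((k:ℝ)+1) := by rw [hcast]; ring
    have hval2 : ((m + 1 + k : ℕ) : ℝ) + -(m:ℝ) = (k:ℝ)+1 := by push_cast; ring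
    simp only [hg, hch, hsgn, hval1, hval2, he.neg_pow, pow_add]
    ring
  have h2 : (0:ℝ) = ∑ k ∈ range m, (g (m-1-k) + g (m+1+k)) + g m := by
    rw [Finset.sum_add_distrib, ← hrefl]
    rw [← h0, hsplit]; ring
  set S : ℝ := ∑ k ∈ range m, (-1:ℝ)^k * ((2*m).choose (m + 1 + k) : ℝ) * ((k:ℝ) + 1) ^ e with hS
  have h3 : ∑ k ∈ range m, (g (m-1-k) + g (m+1+k)) = 2 * (-1:ℝ)^(m+1) * S := by
    rw [Finset.sum_congr rfl hpair, hS, Finset.mul_sum]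
    exact Finset.sum_congr rfl fun k _ => by ring
  have hgm : g m = (-1:ℝ)^m * ((2*m).choose m : ℝ) * (0:ℝ)^e := by
    rw [hg]; norm_num
  rw [h3, hgm] at h2
  have hSval : S = ((2*m).choose m : ℝ) * (0:ℝ)^e / 2 := by
    rcases Nat.even_or_odd m with hme | hmo
    · rw [hme.neg_one_pow, (hme.add_one).neg_one_pow] at h2; linarith
    · rw [hmo.neg_one_pow, ((hmo.add_one).neg_one_pow)] at h2; linarith
  have hgoal : ∑ j ∈ Icc 1 m, (-1 : ℝ) ^ (j - 1) * ((2 * m).choose (m + j) : ℝ) * (j : ℝ) ^ e = S := by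
    rw [← Finset.Ico_add_one_right_eq_Icc, Finset.sum_Ico_eq_sum_range]
    refine Finset.sum_congr rfl fun k _ => ?_
    have : 1 + k - 1 = k := by omega
    rw [this, show m + (1 + k) = m + 1 + k by omega]
    push_cast; ring
  rw [hgoal, hSval]
  rcases Nat.eq_zero_or_pos e with rfl | hepos
  · simp
  · rw [zero_pow (by omega), if_neg (by omega)]; ring

lemma alt_coeffkey (m n : ℕ) (hm : 1 ≤ m) (hn : n ≤ 2 * m) :
    ∑ j ∈ Icc 1 m, altGamma m j * (((j:ℝ)/2) ^ n - (-((j:ℝ)/2)) ^ n)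
      = if n = 1 then 1 else 0 := by
  have hC0 : (0:ℝ) < (((2*m).choose m : ℕ) : ℝ) := by
    exact_mod_cast Nat.choose_pos (by omega : m ≤ 2*m)
  rcases Nat.even_or_odd n with hne | hno
  · rw [if_neg (by rintro rfl; exact Nat.not_even_one hne)]
    apply Finset.sum_eq_zero
    intro j _
    rw [hne.neg_pow, sub_self, mul_zero]
  · obtain ⟨t, ht⟩ := hno
    have hn1 : 1 ≤ n := by omega
    have heven : Even (n - 1) := by exact ⟨t, by omega⟩
    have hterm : ∀ j ∈ Icc 1 m, altGamma m j * (((j:ℝ)/2) ^ n - (-((j:ℝ)/2)) ^ n)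
        = ((-1:ℝ) ^ (j-1) * ((2*m).choose (m+j) : ℝ) * (j:ℝ) ^ (n-1))
            * (4 / (2 ^ n * ((2*m).choose m : ℝ))) := by
      intro j hj
      have hj1 : 1 ≤ j := (Finset.mem_Icc.mp hj).1
      have hjR : (j : ℝ) ≠ 0 := by positivity
      have hodd : Odd n := ⟨t, ht⟩
      rw [hodd.neg_pow, sub_neg_eq_add]
      have hpow : ((j:ℝ)/2) ^ n = (j:ℝ)^(n-1) * (j:ℝ) / 2 ^ n := by
        rw [div_pow, ← pow_succ, show n - 1 + 1 = n by omega]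
      rw [hpow, altGamma]
      field_simp
      ring
    rw [Finset.sum_congr rfl hterm, ← Finset.sum_mul,
      alt_halfrow m (n-1) hm heven (by omega)]
    rcases eq_or_ne n 1 with rfl | hne1
    · rw [if_pos rfl, if_pos rfl]
      field_simp
      ring
    · rw [if_neg (by omega), if_neg hne1, zero_mul]

lemma alt_first (m p : ℕ) (hm : 1 ≤ m) (hp : p ≤ 2 * m - 1) :
    ((bernoulli p : ℚ) : ℝ) =
      ∑ j ∈ Finset.Icc 1 m, altGamma m j *
        ∑ i ∈ Finset.range j, ((j : ℝ) / 2 - (i : ℝ) - 1) ^ p := by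
  classical
  set E : ℝ → PowerSeries ℝ := fun c => rescale c (exp ℝ) with hE
  set F : PowerSeries ℝ :=
    ∑ j ∈ Icc 1 m, PowerSeries.C (altGamma m j) *
      ∑ i ∈ range j, E ((j : ℝ)/2 - (i : ℝ) - 1) with hF
  -- telescoping
  have htel : ∀ j : ℕ, (∑ i ∈ range j, E ((j : ℝ)/2 - (i : ℝ) - 1)) * (exp ℝ - 1)
      = E ((j:ℝ)/2) - E (-((j:ℝ)/2)) := by
    intro j
    have hstep : ∀ i : ℕ, E ((j : ℝ)/2 - (i : ℝ) - 1) * (exp ℝ - 1)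
        = E ((j:ℝ)/2 - (i:ℝ)) - E ((j:ℝ)/2 - ((i:ℕ)+1:ℕ)) := by
      intro i
      rw [mul_sub, mul_one]
      congr 1
      · calc E ((j : ℝ)/2 - (i : ℝ) - 1) * exp ℝ
            = E ((j : ℝ)/2 - (i : ℝ) - 1) * E 1 := by rw [hE]; simp [rescale_one]
          _ = E ((j:ℝ)/2 - (i:ℝ) - 1 + 1) := by rw [hE]; exact exp_mul_exp_eq_exp_add _ _
          _ = E ((j:ℝ)/2 - (i:ℝ)) := by norm_num
      · congr 1
        push_cast
        ring
    rw [Finset.sum_mul, Finset.sum_congr rfl (fun i _ => hstep i),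
      Finset.sum_range_sub' (fun i => E ((j:ℝ)/2 - (i:ℕ))) j]
    congr 2
    · norm_num
    · ring
  have hFmul : F * (exp ℝ - 1)
      = ∑ j ∈ Icc 1 m, PowerSeries.C (altGamma m j) * (E ((j:ℝ)/2) - E (-((j:ℝ)/2))) := by
    rw [hF, Finset.sum_mul]
    exact Finset.sum_congr rfl fun j _ => by rw [mul_assoc, htel j]
  -- coefficients of F * (exp - 1)
  have hDcoeff : ∀ n : ℕ, n ≤ 2 * m →
      coeff n (F * (exp ℝ - 1)) = coeff n (X : PowerSeries ℝ) := by
    intro n hn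
    rw [hFmul, map_sum, PowerSeries.coeff_X]
    have hterm : ∀ j ∈ Icc 1 m,
        coeff n (PowerSeries.C (altGamma m j) * (E ((j:ℝ)/2) - E (-((j:ℝ)/2))))
        = altGamma m j * (((j:ℝ)/2)^n - (-((j:ℝ)/2))^n) * (1 / (n.factorial : ℝ)) := by
      intro j _
      rw [PowerSeries.coeff_C_mul, map_sub, hE]
      simp only [coeff_rescale, coeff_exp, eq_ratCast, Rat.cast_div, Rat.cast_one,
        Rat.cast_natCast]
      ring
    rw [Finset.sum_congr rfl hterm, ← Finset.sum_mul, alt_coeffkey m n hm hn]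
    rcases eq_or_ne n 1 with rfl | hne
    · simp
    · simp [hne]
  -- H = F - B has vanishing coefficients below 2m
  set B : PowerSeries ℝ := bernoulliPowerSeries ℝ with hB
  have hH : ∀ n : ℕ, n ≤ 2 * m → coeff n ((F - B) * (exp ℝ - 1)) = 0 := by
    intro n hn
    rw [sub_mul, hB, bernoulliPowerSeries_mul_exp_sub_one, map_sub, hDcoeff n hn, sub_self]
  have hHcoeff : ∀ q : ℕ, q < 2 * m → coeff q (F - B) = 0 := by
    intro q
    induction q using Nat.strong_induction_on with
    | _ q IH =>
      intro hq
      have h1 := hH (q + 1) (by omega)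
      rw [PowerSeries.coeff_mul, Finset.Nat.sum_antidiagonal_eq_sum_range_succ_mk] at h1
      rw [Finset.sum_eq_single q] at h1
      · simp only [show q + 1 - q = 1 by omega, map_sub, PowerSeries.coeff_one,
          if_neg one_ne_zero, coeff_exp, sub_zero, eq_ratCast, Nat.factorial_one,
          Nat.cast_one, div_one, Rat.cast_one, mul_one] at h1
        rwa [map_sub]
      · intro k hk hne
        rcases lt_or_gt_of_ne hne with hlt | hgt
        · rw [IH k hlt (by omega), zero_mul]
        · have hk1 : k = q + 1 := by have := mem_range.mp hk; omega
          subst hk1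
          rw [show q + 1 - (q + 1) = 0 by omega, map_sub, coeff_zero_eq_constantCoeff,
            map_sub, constantCoeff_exp, map_one, sub_self, mul_zero]
      · intro hq'
        exact absurd (mem_range.mpr (by omega)) hq'
  -- conclude
  have hple : p < 2 * m := by omega
  have hcoeffF : coeff p F
      = (∑ j ∈ Icc 1 m, altGamma m j * ∑ i ∈ range j, ((j : ℝ)/2 - (i:ℝ) - 1) ^ p)
          * (1 / (p.factorial : ℝ)) := by
    rw [hF, map_sum, Finset.sum_mul]
    refine Finset.sum_congr rfl fun j _ => ?_
    rw [PowerSeries.coeff_C_mul, map_sum]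
    simp only [hE, coeff_rescale, coeff_exp, eq_ratCast, Rat.cast_div, Rat.cast_one,
      Rat.cast_natCast]
    rw [← Finset.sum_mul]
    ring
  have hcoeffB : coeff p B = ((bernoulli p : ℚ) : ℝ) * (1 / (p.factorial : ℝ)) := by
    rw [hB, bernoulliPowerSeries, coeff_mk, eq_ratCast]
    push_cast
    ring
  have heq : coeff p F = coeff p B := by
    have := hHcoeff p hple
    rw [map_sub, sub_eq_zero] at this
    exact this
  rw [hcoeffF, hcoeffB] at heq
  have hfac : (1 / (p.factorial : ℝ)) ≠ 0 := by positivity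
  exact (mul_right_cancel₀ hfac heq).symm

lemma alt_second (m p : ℕ) (hm : 1 ≤ m) :
    ∑ j ∈ Finset.Icc 1 m, altGamma m j *
        ∑ i ∈ Finset.range j, ((j : ℝ) / 2 - (i : ℝ) - 1) ^ p =
      1 / 2 ^ p * (altTau m 1 * (-1 : ℝ) ^ p +
        ∑ β ∈ Finset.Icc 2 m, altTau m β * (((β : ℝ) - 2) ^ p + (-(β : ℝ)) ^ p)) := by
  classical
  set f : ℕ → ℝ := fun β => (-(β:ℝ)) ^ p + (if 2 ≤ β then ((β:ℝ) - 2) ^ p else 0) with hf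
  -- Step A: per-j regrouping
  have hA : ∀ j : ℕ, 1 ≤ j → ∑ i ∈ Finset.range j, ((j : ℝ) / 2 - (i : ℝ) - 1) ^ p
      = 1 / 2 ^ p * ∑ δ ∈ Finset.range ((j + 1) / 2), f (j - 2 * δ) := by
    intro j hj
    set a := j / 2 with ha
    set b := (j + 1) / 2 with hb
    have hab : a + b = j := by omega
    have hval : ∀ i : ℕ, ((j : ℝ) / 2 - (i : ℝ) - 1) ^ p
        = 1 / 2 ^ p * ((j : ℝ) - 2 * i - 2) ^ p := by
      intro i
      rw [show (j : ℝ) / 2 - (i : ℝ) - 1 = ((j : ℝ) - 2 * i - 2) / 2 by ring, div_pow]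
      ring
    simp only [hval]
    rw [← Finset.mul_sum]
    congr 1
    have hsplit : ∑ i ∈ Finset.range j, ((j : ℝ) - 2 * i - 2) ^ p
        = ∑ i ∈ Finset.range a, ((j : ℝ) - 2 * i - 2) ^ p
          + ∑ δ ∈ Finset.range b, ((j : ℝ) - 2 * ((a + δ : ℕ) : ℝ) - 2) ^ p := by
      have h := Finset.sum_range_add (fun i => ((j : ℝ) - 2 * (i : ℝ) - 2) ^ p) a b
      rw [hab] at h
      exact h
    rw [hsplit]
    have hneg : ∑ δ ∈ Finset.range b, ((j : ℝ) - 2 * ((a + δ : ℕ) : ℝ) - 2) ^ p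
        = ∑ δ ∈ Finset.range b, (-((j - 2 * δ : ℕ) : ℝ)) ^ p := by
      rw [← Finset.sum_range_reflect (fun δ => ((j : ℝ) - 2 * ((a + δ : ℕ) : ℝ) - 2) ^ p) b]
      refine Finset.sum_congr rfl fun δ hδ => ?_
      have hδ' : δ < b := mem_range.mp hδ
      have h2δ : 2 * δ ≤ j := by omega
      congr 1
      have h1 : ((j - 2 * δ : ℕ) : ℝ) = (j : ℝ) - 2 * δ := by
        rw [Nat.cast_sub h2δ]; push_cast; ring
      have h2 : ((a + (b - 1 - δ) : ℕ) : ℝ) = (j : ℝ) - 1 - δ := by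
        rw [show a + (b - 1 - δ) = j - (1 + δ) by omega, Nat.cast_sub (by omega)]
        push_cast; ring
      rw [h1, h2]
      ring
    have hpos : ∑ i ∈ Finset.range a, ((j : ℝ) - 2 * i - 2) ^ p
        = ∑ δ ∈ Finset.range b, (if 2 ≤ j - 2 * δ then (((j - 2 * δ : ℕ) : ℝ) - 2) ^ p else 0) := by
      have h1 : ∀ δ ∈ Finset.range a, ((j : ℝ) - 2 * δ - 2) ^ p
          = (if 2 ≤ j - 2 * δ then (((j - 2 * δ : ℕ) : ℝ) - 2) ^ p else 0) := by
        intro δ hδ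
        have hδ' : δ < a := mem_range.mp hδ
        rw [if_pos (by omega)]
        congr 1
        rw [Nat.cast_sub (by omega)]
        push_cast; ring
      rw [Finset.sum_congr rfl h1]
      refine Finset.sum_subset (Finset.range_subset_range.mpr (by omega : a ≤ b)) ?_
      intro δ hδb hδn
      rw [if_neg (by simp only [Finset.mem_range, not_lt] at hδn; omega)]
    rw [hneg, hpos, ← Finset.sum_add_distrib]
    refine Finset.sum_congr rfl fun δ _ => ?_
    rw [hf]
    ring
  -- Step B: swap the double sum
  have hB : ∑ j ∈ Finset.Icc 1 m, altGamma m j * ∑ δ ∈ Finset.range ((j + 1) / 2), f (j - 2 * δ)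
      = ∑ β ∈ Finset.Icc 1 m, altTau m β * f β := by
    have hL : ∀ j, altGamma m j * ∑ δ ∈ Finset.range ((j + 1) / 2), f (j - 2 * δ)
        = ∑ δ ∈ Finset.range ((j + 1) / 2), altGamma m j * f (j - 2 * δ) := fun j =>
      Finset.mul_sum _ _ _
    have hR : ∀ β, altTau m β * f β
        = ∑ δ ∈ Finset.range ((m - β) / 2 + 1), altGamma m (β + 2 * δ) * f β := fun β => by
      rw [altTau, Finset.sum_mul]
    simp only [hL, hR]
    rw [Finset.sum_sigma' (Finset.Icc 1 m) (fun j => Finset.range ((j + 1) / 2))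
        (fun j δ => altGamma m j * f (j - 2 * δ)),
      Finset.sum_sigma' (Finset.Icc 1 m) (fun β => Finset.range ((m - β) / 2 + 1))
        (fun β δ => altGamma m (β + 2 * δ) * f β)]
    refine Finset.sum_nbij' (fun x => ⟨x.1 - 2 * x.2, x.2⟩) (fun x => ⟨x.1 + 2 * x.2, x.2⟩)
      ?_ ?_ ?_ ?_ ?_
    · rintro ⟨j, δ⟩ hx
      simp only [Finset.mem_sigma, Finset.mem_Icc, Finset.mem_range] at hx ⊢
      omega
    · rintro ⟨β, δ⟩ hx
      simp only [Finset.mem_sigma, Finset.mem_Icc, Finset.mem_range] at hx ⊢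
      omega
    · rintro ⟨j, δ⟩ hx
      simp only [Finset.mem_sigma, Finset.mem_Icc, Finset.mem_range] at hx
      simp only [Sigma.mk.inj_iff, heq_eq_eq, and_true]
      omega
    · rintro ⟨β, δ⟩ hx
      simp only [Finset.mem_sigma, Finset.mem_Icc, Finset.mem_range] at hx
      simp only [Sigma.mk.inj_iff, heq_eq_eq, and_true]
      omega
    · rintro ⟨j, δ⟩ hx
      simp only [Finset.mem_sigma, Finset.mem_Icc, Finset.mem_range] at hx
      simp only []
      rw [show j - 2 * δ + 2 * δ = j by omega]
  -- Step C: peel off β = 1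
  have hC : ∑ β ∈ Finset.Icc 1 m, altTau m β * f β
      = altTau m 1 * (-1 : ℝ) ^ p
        + ∑ β ∈ Finset.Icc 2 m, altTau m β * (((β : ℝ) - 2) ^ p + (-(β : ℝ)) ^ p) := by
    have hins : Finset.Icc 1 m = insert 1 (Finset.Icc 2 m) := by
      ext x; simp only [Finset.mem_Icc, Finset.mem_insert]; omega
    rw [hins, Finset.sum_insert (by simp)]
    congr 1
    · rw [hf]; norm_num
    · refine Finset.sum_congr rfl fun β hβ => ?_
      have hβ2 : 2 ≤ β := (Finset.mem_Icc.mp hβ).1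
      rw [hf]
      simp only [if_pos hβ2]
      ring
  calc ∑ j ∈ Finset.Icc 1 m, altGamma m j *
        ∑ i ∈ Finset.range j, ((j : ℝ) / 2 - (i : ℝ) - 1) ^ p
      = ∑ j ∈ Finset.Icc 1 m, altGamma m j *
          (1 / 2 ^ p * ∑ δ ∈ Finset.range ((j + 1) / 2), f (j - 2 * δ)) := by
        refine Finset.sum_congr rfl fun j hj => ?_
        rw [hA j (Finset.mem_Icc.mp hj).1]
    _ = 1 / 2 ^ p * ∑ j ∈ Finset.Icc 1 m, altGamma m j *
          ∑ δ ∈ Finset.range ((j + 1) / 2), f (j - 2 * δ) := by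
        rw [Finset.mul_sum]
        exact Finset.sum_congr rfl fun j _ => by ring
    _ = _ := by rw [hB, hC]

/-- The Bernoulli numbers (with `B₁ = −1/2`) expressed through the Alt coefficients:
for `0 ≤ p ≤ 2m−1`,
`B_p = ∑_{j=1}^m γ_{m,j} ∑_{i=0}^{j−1} (j/2−i−1)^p
     = 2^{−p}·(τ_{m,1}(−1)^p + ∑_{β=2}^m τ_{m,β}((β−2)^p + (−β)^p))`. -/
theorem bernoulli_eq_alt_coeffs (m p : ℕ) (hm : 1 ≤ m) (hp : p ≤ 2 * m - 1) :
    ((bernoulli p : ℚ) : ℝ) =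
      (∑ j ∈ Finset.Icc 1 m, altGamma m j *
        ∑ i ∈ Finset.range j, ((j : ℝ) / 2 - (i : ℝ) - 1) ^ p) ∧
    ((bernoulli p : ℚ) : ℝ) =
      1 / 2 ^ p * (altTau m 1 * (-1 : ℝ) ^ p +
        ∑ β ∈ Finset.Icc 2 m, altTau m β * (((β : ℝ) - 2) ^ p + (-(β : ℝ)) ^ p)) := by
  refine ⟨alt_first m p hm hp, ?_⟩
  rw [alt_first m p hm hp]
  exact alt_second m p hm
end

section
/- Let m ≥ 1 be an integer, a a real number with a ≥ (m+3)/2, θ₀ ∈ (0, π/2], and f : ℂ → ℂ continuous on the sector S, holomorphic in the interior of S, and satisfying |f(z)| ≤ μ·|z+a+1|^λ for all z ∈ S, where μ ≥ 0 and λ ≥ 0 are real. Then for every nonnegative integer α and every real x ≥ −m/2 − 1/2, the α-th derivative of f at x satisfies |f^{(α)}(x)| ≤ μ · α! · (2 + sin θ₀)^λ · (sin θ₀)^{−α} · (x+a)^{λ−α}. -/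
open Real

/-- The closed sector of the complex plane with vertex `−a` and half-angle `θ₀`:
`S := { −a + r·e^{iθ} : r ≥ 0, |θ| ≤ θ₀ }`. -/
def altSector (a θ₀ : ℝ) : Set ℂ :=
  {z : ℂ | ∃ r θ : ℝ, 0 ≤ r ∧ |θ| ≤ θ₀ ∧ z = -(a : ℂ) + r * Complex.exp (θ * Complex.I)}

lemma mem_altSector_of_re (a θ₀ : ℝ) (hθ0 : 0 < θ₀) (hθπ : θ₀ ≤ π) (w : ℂ)
    (h : ‖w‖ * Real.cos θ₀ ≤ w.re) : -(a : ℂ) + w ∈ altSector a θ₀ := by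
  rcases eq_or_ne w 0 with rfl | hw
  · exact ⟨0, 0, le_refl 0, by simpa using hθ0.le, by simp⟩
  · refine ⟨‖w‖, Complex.arg w, norm_nonneg w, ?_, ?_⟩
    · by_contra hlt
      push_neg at hlt
      have habs : 0 < ‖w‖ := norm_pos_iff.mpr hw
      have hcosle : Real.cos θ₀ ≤ Real.cos (Complex.arg w) := by
        rw [Complex.cos_arg hw]
        rw [le_div_iff₀ habs]
        linarith [h]
      have h1 : Real.cos |Complex.arg w| < Real.cos θ₀ :=
        Real.strictAntiOn_cos ⟨hθ0.le, hθπ⟩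
          ⟨abs_nonneg _, Complex.abs_arg_le_pi w⟩ hlt
      rw [Real.cos_abs] at h1
      linarith
    · rw [Complex.norm_mul_exp_arg_mul_I w]

lemma closedBall_subset_altSector (a θ₀ x : ℝ) (hθ : θ₀ ∈ Set.Ioc 0 (π/2))
    (hd : 0 < x + a) :
    Metric.closedBall (x : ℂ) ((x + a) * Real.sin θ₀) ⊆ altSector a θ₀ := by
  intro z hz
  have hpi : (0:ℝ) < π := Real.pi_pos
  set s := Real.sin θ₀ with hs_def
  set c := Real.cos θ₀ with hc_def
  have hs : 0 < s := Real.sin_pos_of_pos_of_lt_pi hθ.1 (lt_of_le_of_lt hθ.2 (by linarith))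
  have hs1 : s ≤ 1 := Real.sin_le_one θ₀
  have hc : 0 ≤ c := Real.cos_nonneg_of_mem_Icc ⟨by linarith [hθ.1], hθ.2⟩
  have hsc : s^2 + c^2 = 1 := Real.sin_sq_add_cos_sq θ₀
  set d := x + a with hdd
  have hw : z = -(a:ℂ) + (z + a) := by ring
  rw [hw]
  apply mem_altSector_of_re a θ₀ hθ.1 (le_trans hθ.2 (by linarith))
  set w := z + (a:ℂ) with hwdef
  set t := (z - x).re with htdef
  set i := (z - x).im with hidef
  have hre : w.re = d + t := by
    simp [hwdef, htdef, hdd, Complex.add_re, Complex.sub_re, Complex.ofReal_re]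
    ring
  have him : w.im = i := by
    simp [hwdef, hidef, Complex.add_im, Complex.sub_im, Complex.ofReal_im]
  have hu : ‖z - x‖ ≤ d * s := by
    simpa [Metric.mem_closedBall, Complex.dist_eq] using hz
  have h2 : t^2 + i^2 ≤ (d*s)^2 := by
    have h3 := Complex.sq_norm (z - x)
    have h4 : Complex.normSq (z - x) = t^2 + i^2 := by
      rw [Complex.normSq_apply]; ring
    nlinarith [norm_nonneg (z - x)]
  have hA : ‖w‖ ^ 2 = (d + t)^2 + i^2 := by
    rw [Complex.sq_norm, Complex.normSq_apply, hre, him]; ring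
  have hren : 0 ≤ w.re := by
    rw [hre]
    nlinarith [abs_le.mp (le_trans (Complex.abs_re_le_norm (z - x)) hu)]
  have ht : -(d*s) ≤ t := by
    have := le_trans (Complex.abs_re_le_norm (z - x)) hu
    have := abs_le.mp (le_trans (Complex.abs_re_le_norm (z - x)) hu)
    linarith [this.1]
  have hsq : (‖w‖ * c)^2 ≤ w.re^2 := by
    rw [hre]
    nlinarith [sq_nonneg (s^2*d + t), mul_le_mul_of_nonneg_left h2 (sq_nonneg c)]
  have habsc : 0 ≤ ‖w‖ * c := mul_nonneg (norm_nonneg w) hc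
  nlinarith [hsq, habsc, hren]

/-- Cauchy-type bound on the derivatives: if `f` is continuous on the sector `S`,
holomorphic in its interior, and `|f(z)| ≤ μ·|z+a+1|^λ` on `S`, then for every `α ∈ ℕ`
and real `x ≥ −m/2 − 1/2`,
`|f^{(α)}(x)| ≤ μ·α!·(2+sin θ₀)^λ·(sin θ₀)^{−α}·(x+a)^{λ−α}`. -/
theorem sector_derivative_bound (m : ℕ) (hm : 1 ≤ m) (a θ₀ μ lam : ℝ)
    (ha : ((m : ℝ) + 3) / 2 ≤ a) (hθ : θ₀ ∈ Set.Ioc 0 (π / 2))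
    (f : ℂ → ℂ)
    (hcont : ContinuousOn f (altSector a θ₀))
    (hholo : DifferentiableOn ℂ f (interior (altSector a θ₀)))
    (hμ : 0 ≤ μ) (hlam : 0 ≤ lam)
    (hbound : ∀ z ∈ altSector a θ₀,
      ‖f z‖ ≤ μ * ‖z + (a : ℂ) + 1‖ ^ lam) :
    ∀ (α : ℕ) (x : ℝ), -(m : ℝ) / 2 - 1 / 2 ≤ x →
      ‖iteratedDeriv α f (x : ℂ)‖ ≤
        μ * (α.factorial : ℝ) * (2 + Real.sin θ₀) ^ lam * Real.sin θ₀ ^ (-(α : ℝ)) *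
          (x + a) ^ (lam - (α : ℝ)) := by
  intro α x hx
  have hpi : (0:ℝ) < π := Real.pi_pos
  set s := Real.sin θ₀ with hs_def
  have hs : 0 < s := Real.sin_pos_of_pos_of_lt_pi hθ.1 (lt_of_le_of_lt hθ.2 (by linarith))
  have hs1 : s ≤ 1 := Real.sin_le_one θ₀
  set d := x + a with hd_def
  have hm1 : (1:ℝ) ≤ m := by exact_mod_cast hm
  have hd : 1 ≤ d := by rw [hd_def]; linarith
  have hd0 : 0 < d := by linarith
  set R : ℝ := d * s with hR_def
  have hR : 0 < R := mul_pos hd0 hs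
  have hsub : Metric.closedBall (x : ℂ) R ⊆ altSector a θ₀ := by
    rw [hR_def, hd_def]
    exact closedBall_subset_altSector a θ₀ x hθ (by linarith)
  have hball : Metric.ball (x : ℂ) R ⊆ interior (altSector a θ₀) :=
    interior_maximal (Metric.ball_subset_closedBall.trans hsub) Metric.isOpen_ball
  set Rnn : NNReal := ⟨R, hR.le⟩ with hRnn
  have hps : HasFPowerSeriesOnBall f (cauchyPowerSeries f x Rnn) x Rnn := by
    apply Complex.hasFPowerSeriesOnBall_of_differentiable_off_countable
      (s := ∅) Set.countable_empty (hcont.mono hsub)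
    · intro z hz
      exact hholo.differentiableAt (isOpen_interior.mem_nhds (hball hz.1))
    · exact_mod_cast hR
  set M : ℝ := μ * (d * (2 + s)) ^ lam with hM
  have hds : 0 ≤ d * (2 + s) := by nlinarith
  have hM0 : 0 ≤ M := mul_nonneg hμ (Real.rpow_nonneg hds _)
  have hfb : ∀ z ∈ Metric.closedBall (x:ℂ) R, ‖f z‖ ≤ M := by
    intro z hz
    refine le_trans (hbound z (hsub hz)) (mul_le_mul_of_nonneg_left ?_ hμ)
    apply Real.rpow_le_rpow (norm_nonneg _) ?_ hlam
    have h1 : ‖z + a + 1‖ ≤ ‖(x:ℂ) + a + 1‖ + ‖z - x‖ := by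
      have h : z + (a:ℂ) + 1 = ((x:ℂ) + a + 1) + (z - x) := by ring
      rw [h]; exact norm_add_le _ _
    have h2 : ‖(x:ℂ)+a+1‖ = d + 1 := by
      rw [show (x:ℂ)+(a:ℂ)+1 = ((x + a + 1 : ℝ):ℂ) by push_cast; ring, Complex.norm_real, Real.norm_eq_abs,
        abs_of_pos (by linarith), hd_def]
    have h3 : ‖z - x‖ ≤ R := by
      simpa [Complex.dist_eq] using hz
    calc ‖z + a + 1‖ ≤ (d + 1) + R := by rw [← h2]; linarith
      _ ≤ d * (2 + s) := by rw [hR_def]; nlinarith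
  have hcirc : Continuous fun θ : ℝ => ‖f (circleMap x R θ)‖ := by
    apply Continuous.norm
    apply (hcont.mono hsub).comp_continuous (continuous_circleMap _ _)
    intro θ
    exact Metric.sphere_subset_closedBall (circleMap_mem_sphere (x:ℂ) hR.le θ)
  have hint : ∫ θ in (0:ℝ)..2*π, ‖f (circleMap x R θ)‖ ≤ 2*π*M := by
    calc ∫ θ in (0:ℝ)..2*π, ‖f (circleMap x R θ)‖ ≤ ∫ _ in (0:ℝ)..2*π, M := by
          apply intervalIntegral.integral_mono_on Real.two_pi_pos.le
            (hcirc.intervalIntegrable _ _) intervalIntegrable_const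
          intro θ _
          exact hfb _ (Metric.sphere_subset_closedBall (circleMap_mem_sphere (x:ℂ) hR.le θ))
      _ = 2*π*M := by rw [intervalIntegral.integral_const]; simp [hM]
  have hcoef : ‖cauchyPowerSeries f x Rnn α‖ ≤ M * R⁻¹ ^ α := by
    refine le_trans (norm_cauchyPowerSeries_le f x R α) ?_
    rw [abs_of_pos hR]
    refine mul_le_mul_of_nonneg_right ?_ (by positivity)
    rw [inv_mul_le_iff₀ Real.two_pi_pos]
    calc ∫ θ in (0:ℝ)..2*π, ‖f (circleMap x R θ)‖ ≤ 2*π*M := hint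
      _ = 2 * π * M := by ring
  have hiter : ‖iteratedDeriv α f (x:ℂ)‖ ≤ α.factorial * (M * R⁻¹ ^ α) := by
    have heq : iteratedDeriv α f (x:ℂ)
        = α.factorial • (cauchyPowerSeries f x Rnn α fun _ => (1:ℂ)) :=
      (hps.factorial_smul (1:ℂ) α).symm
    rw [heq, ← Nat.cast_smul_eq_nsmul ℝ, norm_smul, Real.norm_natCast]
    refine mul_le_mul_of_nonneg_left ?_ (Nat.cast_nonneg _)
    calc ‖cauchyPowerSeries f x Rnn α fun _ => (1:ℂ)‖
        ≤ ‖cauchyPowerSeries f x Rnn α‖ * ∏ _i : Fin α, ‖(1:ℂ)‖ :=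
          (cauchyPowerSeries f x Rnn α).le_opNorm _
      _ = ‖cauchyPowerSeries f x Rnn α‖ := by simp
      _ ≤ M * R⁻¹ ^ α := hcoef
  refine le_trans hiter (le_of_eq ?_)
  rw [hM, hR_def, Real.mul_rpow hd0.le (by linarith : (0:ℝ) ≤ 2 + s),
    Real.rpow_sub hd0, Real.rpow_neg hs.le,
    Real.rpow_natCast s α, Real.rpow_natCast d α, mul_inv, mul_pow, inv_pow, inv_pow,
    div_eq_mul_inv]
  ring
end

section
/- For every integer m ≥ 2, one has ∑_{j=1}^{m} |γ_{m,j}| · j^{2m+1} ≤ 1.001·π·Λ*^m·m^{2m+1}. For m = 1, the same inequality holds with the constant 1.0331 in place of 1.001. -/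
open Real

/-- `Λ(t) := (1−t)^{t−1}·(1+t)^{−1−t}·t²`. -/
noncomputable def altLambda (t : ℝ) : ℝ :=
  (1 - t) ^ (t - 1) * (1 + t) ^ (-1 - t) * t ^ 2

/-- `Λ* := max_{0<t<1} Λ(t) = 0.3081…`. -/
noncomputable def altLambdaStar : ℝ := sSup (altLambda '' Set.Ioo 0 1)

lemma log_ratio_lower {x : ℝ} (h0 : 0 ≤ x) (h1 : x < 1) :
    2*x + (2/3)*x^3 ≤ Real.log (1+x) - Real.log (1-x) := by
  set F : ℝ → ℝ := fun y => Real.log (1+y) - Real.log (1-y) - (2*y + (2/3)*y^3) with hF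
  have key : ∀ y ∈ Set.Ico (0:ℝ) 1, HasDerivAt F (2*y^4/(1-y^2)) y := by
    intro y hy
    obtain ⟨hy0, hy1⟩ := hy
    have h1y : (1:ℝ)+y ≠ 0 := by nlinarith
    have h2y : (1:ℝ)-y ≠ 0 := by nlinarith
    have hne : (1:ℝ)-y^2 ≠ 0 := by nlinarith
    have d1 : HasDerivAt (fun y : ℝ => Real.log (1+y)) (1/(1+y)) y := by
      simpa using ((hasDerivAt_id y).const_add 1).log h1y
    have d2 : HasDerivAt (fun y : ℝ => Real.log (1-y)) (-1/(1-y)) y := by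
      simpa using ((hasDerivAt_id y).const_sub 1).log h2y
    have d3 : HasDerivAt (fun y : ℝ => 2*y + (2/3)*y^3) (2 + (2/3)*(3*y^2)) y := by
      simpa using ((hasDerivAt_id y).const_mul 2).fun_add (((hasDerivAt_pow 3 y)).const_mul (2/3))
    have := (d1.fun_sub d2).fun_sub d3
    refine this.congr_deriv ?_
    field_simp
    ring
  have mono : MonotoneOn F (Set.Icc 0 x) := by
    apply monotoneOn_of_deriv_nonneg (convex_Icc 0 x)
    · apply ContinuousOn.sub (ContinuousOn.sub ?_ ?_) (by fun_prop)
      · apply ContinuousOn.log (by fun_prop)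
        intro y hy; have := hy.1; nlinarith [hy.2]
      · apply ContinuousOn.log (by fun_prop)
        intro y hy; nlinarith [hy.2, hy.1]
    · intro y hy
      rw [interior_Icc] at hy
      exact ((key y ⟨hy.1.le, by linarith [hy.2]⟩).differentiableAt).differentiableWithinAt
    · intro y hy
      rw [interior_Icc] at hy
      rw [(key y ⟨hy.1.le, by linarith [hy.2]⟩).deriv]
      have : 0 < 1 - y^2 := by nlinarith [hy.1, hy.2]
      positivity
  have := mono (Set.left_mem_Icc.2 h0) (Set.right_mem_Icc.2 h0) h0
  simp only [hF] at this
  norm_num at this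
  linarith

lemma log_ratio_upper {x : ℝ} (h0 : 0 ≤ x) (h1 : x < 1) :
    Real.log (1+x) - Real.log (1-x) ≤ 2*x + (2/3)*x^3/(1-x^2) := by
  set F : ℝ → ℝ := fun y => (2*y + (2/3)*y^3/(1-y^2)) - (Real.log (1+y) - Real.log (1-y)) with hF
  have key : ∀ y ∈ Set.Ico (0:ℝ) 1, HasDerivAt F ((4/3)*y^4/(1-y^2)^2) y := by
    intro y hy
    obtain ⟨hy0, hy1⟩ := hy
    have h1y : (1:ℝ)+y ≠ 0 := by nlinarith
    have h2y : (1:ℝ)-y ≠ 0 := by nlinarith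
    have hne : (1:ℝ)-y^2 ≠ 0 := by nlinarith
    have d1 : HasDerivAt (fun y : ℝ => Real.log (1+y)) (1/(1+y)) y := by
      simpa using ((hasDerivAt_id y).const_add 1).log h1y
    have d2 : HasDerivAt (fun y : ℝ => Real.log (1-y)) (-1/(1-y)) y := by
      simpa using ((hasDerivAt_id y).const_sub 1).log h2y
    have dq : HasDerivAt (fun y : ℝ => y^3/(1-y^2)) ((3*y^2*(1-y^2) - y^3*(-(2*y)))/(1-y^2)^2) y := by
      apply HasDerivAt.div (hasDerivAt_pow 3 y) ?_ hne
      · simpa using ((hasDerivAt_pow 2 y).const_sub 1)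
    have d3 : HasDerivAt (fun y : ℝ => 2*y + (2/3)*y^3/(1-y^2))
        (2 + (2/3)*((3*y^2*(1-y^2) - y^3*(-(2*y)))/(1-y^2)^2)) y := by
      have := ((hasDerivAt_id y).const_mul 2).fun_add (dq.const_mul (2/3))
      simp only [id] at this
      have hfun : (fun y : ℝ => 2*y + (2/3)*y^3/(1-y^2)) = fun i => 2*i + 2/3*(i^3/(1-i^2)) := by
        funext z; ring
      rw [hfun]; exact this.congr_deriv (by ring)
    have := d3.fun_sub (d1.fun_sub d2)
    refine this.congr_deriv ?_
    field_simp
    ring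
  have mono : MonotoneOn F (Set.Icc 0 x) := by
    apply monotoneOn_of_deriv_nonneg (convex_Icc 0 x)
    · apply ContinuousOn.sub ?_ (ContinuousOn.sub ?_ ?_)
      · apply ContinuousOn.add (by fun_prop)
        apply ContinuousOn.div (by fun_prop) (by fun_prop)
        intro y hy; have := hy.1; nlinarith [hy.2]
      · apply ContinuousOn.log (by fun_prop)
        intro y hy; have := hy.1; nlinarith [hy.2]
      · apply ContinuousOn.log (by fun_prop)
        intro y hy; nlinarith [hy.2, hy.1]
    · intro y hy
      rw [interior_Icc] at hy
      exact ((key y ⟨hy.1.le, by linarith [hy.2]⟩).differentiableAt).differentiableWithinAt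
    · intro y hy
      rw [interior_Icc] at hy
      rw [(key y ⟨hy.1.le, by linarith [hy.2]⟩).deriv]
      have : 0 < 1 - y^2 := by nlinarith [hy.1, hy.2]
      positivity
  have := mono (Set.left_mem_Icc.2 h0) (Set.right_mem_Icc.2 h0) h0
  simp only [hF] at this
  norm_num at this
  linarith

lemma log_ratio_scaled_upper (n : ℕ) (hn : 1 ≤ n) :
    (2*(n:ℝ)+1) * Real.log (((n:ℝ)+1)/n) ≤ 2 + (2/3)/((2*(n:ℝ)+1)^2 - 1) := by
  have hn' : (1:ℝ) ≤ (n:ℝ) := by exact_mod_cast hn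
  set A : ℝ := 2*(n:ℝ)+1 with hA
  have hA3 : (3:ℝ) ≤ A := by simp [hA]; linarith
  have hA0 : (0:ℝ) < A := by linarith
  have hx0 : (0:ℝ) ≤ 1/A := by positivity
  have hx1 : 1/A < 1 := by rw [div_lt_one hA0]; linarith
  have hnpos : (0:ℝ) < (n:ℝ) := by linarith
  have hnne : (n:ℝ) ≠ 0 := ne_of_gt hnpos
  have hlog : Real.log (((n:ℝ)+1)/n) = Real.log (1+1/A) - Real.log (1-1/A) := by
    have e1 : (1:ℝ)+1/A = (2*((n:ℝ)+1))/(2*(n:ℝ)+1) := by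
      rw [hA]; field_simp; ring
    have e2 : (1:ℝ)-1/A = (2*(n:ℝ))/(2*(n:ℝ)+1) := by
      rw [hA]; field_simp; ring
    rw [e1, e2, Real.log_div (by positivity) hnne,
        Real.log_div (by positivity) (by positivity),
        Real.log_div (ne_of_gt (by linarith)) (by positivity),
        Real.log_mul two_ne_zero (by positivity), Real.log_mul two_ne_zero hnne]
    ring
  have := log_ratio_upper hx0 hx1
  rw [hlog]
  have hAne : A ≠ 0 := ne_of_gt hA0
  have hA2 : (0:ℝ) < A^2 - 1 := by nlinarith
  have heq : A * (2*(1/A) + (2/3)*(1/A)^3/(1-(1/A)^2)) = 2 + (2/3)/(A^2-1) := by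
    field_simp
  exact le_trans (mul_le_mul_of_nonneg_left this hA0.le) (le_of_eq heq)

lemma log_ratio_scaled_lower (n : ℕ) (hn : 1 ≤ n) :
    2 + (2/3)/(2*(n:ℝ)+1)^2 ≤ (2*(n:ℝ)+1) * Real.log (((n:ℝ)+1)/n) := by
  have hn' : (1:ℝ) ≤ (n:ℝ) := by exact_mod_cast hn
  set A : ℝ := 2*(n:ℝ)+1 with hA
  have hA3 : (3:ℝ) ≤ A := by simp [hA]; linarith
  have hA0 : (0:ℝ) < A := by linarith
  have hx0 : (0:ℝ) ≤ 1/A := by positivity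
  have hx1 : 1/A < 1 := by rw [div_lt_one hA0]; linarith
  have hnpos : (0:ℝ) < (n:ℝ) := by linarith
  have hnne : (n:ℝ) ≠ 0 := ne_of_gt hnpos
  have hlog : Real.log (((n:ℝ)+1)/n) = Real.log (1+1/A) - Real.log (1-1/A) := by
    have e1 : (1:ℝ)+1/A = (2*((n:ℝ)+1))/(2*(n:ℝ)+1) := by
      rw [hA]; field_simp; ring
    have e2 : (1:ℝ)-1/A = (2*(n:ℝ))/(2*(n:ℝ)+1) := by
      rw [hA]; field_simp; ring
    rw [e1, e2, Real.log_div (by positivity) hnne,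
        Real.log_div (by positivity) (by positivity),
        Real.log_div (ne_of_gt (by linarith)) (by positivity),
        Real.log_mul two_ne_zero (by positivity), Real.log_mul two_ne_zero hnne]
    ring
  have := log_ratio_lower hx0 hx1
  rw [hlog]
  have heq : A * (2*(1/A) + (2/3)*(1/A)^3) = 2 + (2/3)/A^2 := by
    field_simp
  exact le_trans (le_of_eq heq.symm) (mul_le_mul_of_nonneg_left this hA0.le)

/-- `(1+1/n)^{2n+1}` is antitone. -/

lemma pow_ratio_anti {a b : ℕ} (hb : 1 ≤ b) (hba : b ≤ a) :
    (((a:ℝ)+1)/a)^(2*a+1) ≤ (((b:ℝ)+1)/b)^(2*b+1) := by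
  rcases eq_or_lt_of_le hba with h|h
  · subst h; exact le_refl _
  · have ha : 1 ≤ a := le_trans hb hba
    have ha' : (1:ℝ) ≤ (a:ℝ) := by exact_mod_cast ha
    have hb' : (1:ℝ) ≤ (b:ℝ) := by exact_mod_cast hb
    have hab' : (b:ℝ)+1 ≤ (a:ℝ) := by exact_mod_cast h
    have hra : (1:ℝ) < ((a:ℝ)+1)/a := by rw [lt_div_iff₀ (by linarith)]; linarith
    have hrb : (1:ℝ) < ((b:ℝ)+1)/b := by rw [lt_div_iff₀ (by linarith)]; linarith
    have key : (2*(a:ℝ)+1) * Real.log (((a:ℝ)+1)/a) ≤ (2*(b:ℝ)+1) * Real.log (((b:ℝ)+1)/b) := by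
      refine le_trans (log_ratio_scaled_upper a ha) (le_trans ?_ (log_ratio_scaled_lower b hb))
      have h1 : (0:ℝ) < (2*(b:ℝ)+1)^2 := by positivity
      have h2 : (0:ℝ) < (2*(a:ℝ)+1)^2 - 1 := by nlinarith
      have h3 : (2*(b:ℝ)+1)^2 ≤ (2*(a:ℝ)+1)^2 - 1 := by nlinarith
      have h4 : (2:ℝ)/3/((2*(a:ℝ)+1)^2 - 1) ≤ (2:ℝ)/3/(2*(b:ℝ)+1)^2 :=
        div_le_div_of_nonneg_left (by norm_num) h1 h3
      linarith
    have lpow : Real.log ((((a:ℝ)+1)/a)^(2*a+1)) ≤ Real.log ((((b:ℝ)+1)/b)^(2*b+1)) := by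
      rw [Real.log_pow, Real.log_pow]
      push_cast
      calc (2*(a:ℕ)+1 : ℝ) * Real.log (((a:ℝ)+1)/a) = (2*(a:ℝ)+1) * Real.log (((a:ℝ)+1)/a) := by push_cast; ring
        _ ≤ (2*(b:ℝ)+1) * Real.log (((b:ℝ)+1)/b) := key
        _ = (2*(b:ℕ)+1 : ℝ) * Real.log (((b:ℝ)+1)/b) := by push_cast; ring
    have := (Real.log_le_log_iff (by positivity) (by positivity)).1 lpow
    exact this

private lemma odd_pow_split (x : ℝ) (k : ℕ) : x^(2*k+1) = (x^k)^2*x := by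
  rw [pow_succ, mul_comm 2 k, pow_mul]

lemma keyB (m : ℕ) : ∀ j : ℕ, j + 1 ≤ m →
    (((2*m).choose (m+j) : ℝ) * ((m-j : ℕ) : ℝ)^(m-j) * ((m+j : ℕ):ℝ)^(m+j))^2
        * ((m+j : ℕ):ℝ) * ((m-j : ℕ):ℝ)
      ≤ (((2*m).choose m : ℝ) * ((m:ℝ))^m * ((m:ℝ))^m)^2 * (m:ℝ) * (m:ℝ) := by
  intro j
  induction j with
  | zero => intro _; simp
  | succ j ih =>
    intro hj1
    have hj : j + 1 ≤ m := by omega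
    have ihj := ih hj
    set A : ℕ := m + j with hA
    set B : ℕ := m - (j+1) with hB
    have hBj : m - j = B + 1 := by omega
    have hmj : m + (j+1) = A + 1 := by omega
    have hB1 : 1 ≤ B := by omega
    have hBA : B ≤ A := by omega
    have hA1 : 1 ≤ A := by omega
    -- cast abbreviations
    have hArpos : (0:ℝ) < (A:ℝ) := by exact_mod_cast hA1
    have hBrpos : (0:ℝ) < (B:ℝ) := by exact_mod_cast hB1
    -- choose identity
    have hcc : ((2*m).choose (A+1) : ℝ) * ((A:ℝ)+1) = ((2*m).choose A : ℝ) * ((B:ℝ)+1) := by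
      have h1 : (2*m).choose (A+1) * (A+1) = (2*m).choose A * (2*m - A) := Nat.choose_succ_right_eq (2*m) A
      have h2 : 2*m - A = B + 1 := by omega
      rw [h2] at h1
      exact_mod_cast h1
    -- atom inequality
    have atom : (((A:ℝ)+1)^A)^2*((A:ℝ)+1) * (((B:ℝ)^B)^2*(B:ℝ))
        ≤ (((B:ℝ)+1)^B)^2*((B:ℝ)+1) * (((A:ℝ)^A)^2*(A:ℝ)) := by
      have h := pow_ratio_anti hB1 hBA
      rw [div_pow, div_pow, div_le_div_iff₀ (by positivity) (by positivity)] at h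
      calc (((A:ℝ)+1)^A)^2*((A:ℝ)+1) * (((B:ℝ)^B)^2*(B:ℝ))
          = ((A:ℝ)+1)^(2*A+1) * (B:ℝ)^(2*B+1) := by rw [odd_pow_split, odd_pow_split]
        _ ≤ ((B:ℝ)+1)^(2*B+1) * (A:ℝ)^(2*A+1) := h
        _ = (((B:ℝ)+1)^B)^2*((B:ℝ)+1) * (((A:ℝ)^A)^2*(A:ℝ)) := by rw [odd_pow_split, odd_pow_split]
    rw [hmj]
    rw [hBj] at ihj
    push_cast
    push_cast at ihj
    have sq : ((((2*m).choose (A+1) : ℝ)) * ((A:ℝ)+1))^2 = (((2*m).choose A : ℝ) * ((B:ℝ)+1))^2 := by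
      rw [hcc]
    calc (((2*m).choose (A+1) : ℝ) * (B:ℝ)^B * ((A:ℝ)+1)^(A+1))^2 * ((A:ℝ)+1) * (B:ℝ)
        = ((((2*m).choose (A+1) : ℝ)) * ((A:ℝ)+1))^2
            * ((((A:ℝ)+1)^A)^2*((A:ℝ)+1) * (((B:ℝ)^B)^2*(B:ℝ))) := by
          rw [pow_succ]; ring
      _ = ((((2*m).choose A : ℝ)) * ((B:ℝ)+1))^2
            * ((((A:ℝ)+1)^A)^2*((A:ℝ)+1) * (((B:ℝ)^B)^2*(B:ℝ))) := by rw [sq]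
      _ ≤ ((((2*m).choose A : ℝ)) * ((B:ℝ)+1))^2
            * ((((B:ℝ)+1)^B)^2*((B:ℝ)+1) * (((A:ℝ)^A)^2*(A:ℝ))) := by
          apply mul_le_mul_of_nonneg_left atom (by positivity)
      _ = (((2*m).choose A : ℝ) * ((B:ℝ)+1)^(B+1) * (A:ℝ)^A)^2 * ((A:ℝ)) * ((B:ℝ)+1) := by
          rw [pow_succ]; ring
      _ ≤ (((2*m).choose m : ℝ) * ((m:ℝ))^m * ((m:ℝ))^m)^2 * (m:ℝ) * (m:ℝ) := ihj

lemma altLambda_nonneg {t : ℝ} (h0 : 0 < t) (h1 : t < 1) : 0 ≤ altLambda t := by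
  unfold altLambda
  have h2 : (0:ℝ) ≤ 1 - t := by linarith
  have h3 : (0:ℝ) ≤ 1 + t := by linarith
  positivity

lemma altLambda_le_three {t : ℝ} (h0 : 0 < t) (h1 : t < 1) : altLambda t ≤ 3 := by
  unfold altLambda
  have h2 : (0:ℝ) < 1 - t := by linarith
  have h3 : (1:ℝ) ≤ 1 + t := by linarith
  have e1 : (1-t) ^ (t-1) = Real.exp ((t-1) * Real.log (1-t)) := by
    rw [Real.rpow_def_of_pos h2, mul_comm]
  have hlog : 1 - (1-t)⁻¹ ≤ Real.log (1-t) := by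
    have := Real.add_one_le_exp (Real.log (1-t))
    nlinarith [Real.exp_log h2, Real.one_sub_inv_le_log_of_pos h2]
  have e2 : (t-1) * Real.log (1-t) ≤ 1 := by
    have h4 : (t-1) * Real.log (1-t) = (1-t) * (- Real.log (1-t)) := by ring
    rw [h4]
    have h5 : - Real.log (1-t) ≤ (1-t)⁻¹ - 1 := by linarith
    have h6 : (1-t) * (-Real.log (1-t)) ≤ (1-t) * ((1-t)⁻¹ - 1) := by
      apply mul_le_mul_of_nonneg_left h5 h2.le
    have h7 : (1-t) * ((1-t)⁻¹ - 1) = t := by field_simp; ring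
    linarith
  have b1 : (1-t) ^ (t-1) ≤ Real.exp 1 := by
    rw [e1]; exact Real.exp_le_exp.2 e2
  have b2 : (1+t) ^ (-1-t) ≤ 1 :=
    Real.rpow_le_one_of_one_le_of_nonpos h3 (by linarith)
  have b3 : t^2 ≤ 1 := by nlinarith
  have hp1 : (0:ℝ) ≤ (1-t) ^ (t-1) := Real.rpow_nonneg h2.le _
  have hp2 : (0:ℝ) ≤ (1+t) ^ (-1-t) := Real.rpow_nonneg (by linarith) _
  calc (1-t)^(t-1) * (1+t)^(-1-t) * t^2 ≤ Real.exp 1 * 1 * 1 := by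
        apply mul_le_mul (mul_le_mul b1 b2 hp2 (Real.exp_nonneg 1)) b3 (by positivity) (by positivity)
    _ ≤ 3 := by nlinarith [Real.exp_one_lt_d9]

lemma lambda_bddAbove : BddAbove (altLambda '' Set.Ioo 0 1) := by
  refine ⟨3, ?_⟩
  rintro y ⟨t, ⟨h0, h1⟩, rfl⟩
  exact altLambda_le_three h0 h1

lemma lambda_le_star {t : ℝ} (h0 : 0 < t) (h1 : t < 1) : altLambda t ≤ altLambdaStar :=
  le_csSup lambda_bddAbove ⟨t, ⟨h0, h1⟩, rfl⟩

lemma star_ge : (0.3081115 : ℝ) ≤ altLambdaStar := by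
  have h56 : altLambda (5/6) ^ 6 = 6 * ((6:ℝ)/11)^(11:ℕ) * ((25:ℝ)/36)^(6:ℕ) := by
    unfold altLambda
    have e0 : (1:ℝ) - 5/6 = 1/6 := by norm_num
    have e1 : (5:ℝ)/6 - 1 = -(1/6) := by norm_num
    have e2 : (1:ℝ) + 5/6 = 11/6 := by norm_num
    have e3 : (-1:ℝ) - 5/6 = -(11/6) := by norm_num
    rw [e0, e1, e2, e3]
    rw [mul_pow, mul_pow]
    rw [← Real.rpow_natCast ((1/6 : ℝ) ^ ((-(1/6)):ℝ)) 6, ← Real.rpow_natCast ((11/6 : ℝ) ^ ((-(11/6)):ℝ)) 6]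
    rw [← Real.rpow_mul (by norm_num), ← Real.rpow_mul (by norm_num)]
    norm_num
  have hL : (0.3081115 : ℝ) ≤ altLambda (5/6) := by
    have hnn : (0:ℝ) ≤ altLambda (5/6) := altLambda_nonneg (by norm_num) (by norm_num)
    have hpow : (0.3081115 : ℝ)^6 ≤ altLambda (5/6) ^ 6 := by
      rw [h56]
      norm_num
    exact le_of_pow_le_pow_left₀ (by norm_num) hnn hpow
  exact le_trans hL (lambda_le_star (by norm_num) (by norm_num))

lemma arcsin_gap {a b : ℝ} (h0 : 0 ≤ a) (hab : a ≤ b) (hb : b ≤ 1) :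
    (b - a) / Real.sqrt (1 - a^2) ≤ Real.arcsin b - Real.arcsin a := by
  rcases eq_or_lt_of_le (le_trans hab hb) with h|ha1
  · have hB : b = 1 := le_antisymm hb (h ▸ hab)
    simp [← h, hB]
  · have hs : (0:ℝ) < Real.sqrt (1 - a^2) := by
      apply Real.sqrt_pos.2; nlinarith
    set F : ℝ → ℝ := fun x => Real.arcsin x - x / Real.sqrt (1 - a^2) with hF
    have mono : MonotoneOn F (Set.Icc a b) := by
      apply monotoneOn_of_deriv_nonneg (convex_Icc a b)
      · exact (Real.continuous_arcsin.continuousOn).sub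
          ((continuous_id.continuousOn).div_const _)
      · intro x hx
        rw [interior_Icc] at hx
        have hx1 : x < 1 := lt_of_lt_of_le hx.2 hb
        have hxm1 : x ≠ -1 := by
          intro h; have := lt_of_le_of_lt h0 hx.1; rw [h] at this; linarith
        have hd : HasDerivAt F (1 / Real.sqrt (1 - x^2) - 1 / Real.sqrt (1 - a^2)) x :=
          (Real.hasDerivAt_arcsin hxm1 (ne_of_lt hx1)).sub ((hasDerivAt_id x).div_const _)
        exact hd.differentiableAt.differentiableWithinAt
      · intro x hx
        rw [interior_Icc] at hx
        have hx0 : 0 < x := lt_of_le_of_lt h0 hx.1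
        have hx1 : x < 1 := lt_of_lt_of_le hx.2 hb
        have hd : HasDerivAt F (1 / Real.sqrt (1 - x^2) - 1 / Real.sqrt (1 - a^2)) x :=
          (Real.hasDerivAt_arcsin (by linarith) (ne_of_lt hx1)).sub
            ((hasDerivAt_id x).div_const _)
        rw [hd.deriv]
        have hsx : (0:ℝ) < Real.sqrt (1 - x^2) := by
          apply Real.sqrt_pos.2; nlinarith
        have hle : Real.sqrt (1 - x^2) ≤ Real.sqrt (1 - a^2) := by
          apply Real.sqrt_le_sqrt; nlinarith [hx.1]
        have := one_div_le_one_div_of_le hsx hle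
        linarith
    have h2 := mono (Set.left_mem_Icc.2 hab) (Set.right_mem_Icc.2 hab) hab
    simp only [hF] at h2
    have hdiv : (b - a)/Real.sqrt (1 - a^2) = b/Real.sqrt (1-a^2) - a/Real.sqrt (1-a^2) := by
      field_simp
    linarith

lemma telescope (f : ℕ → ℝ) (m n : ℕ) (h : m ≤ n) :
    ∑ i ∈ Finset.Ico m n, (f (i+1) - f i) = f n - f m := by
  induction n, h using Nat.le_induction with
  | base => simp
  | succ n hn ih => rw [Finset.sum_Ico_succ_top (by omega), ih]; ring

lemma riemann_sum_bound (m : ℕ) (hm : 1 ≤ m) :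
    ∑ j ∈ Finset.Icc 1 (m-1), (m:ℝ)/Real.sqrt ((m:ℝ)^2 - (j:ℝ)^2) ≤ (m:ℝ)*π/2 - 1 := by
  have hm' : (1:ℝ) ≤ (m:ℝ) := by exact_mod_cast hm
  have hmpos : (0:ℝ) < m := by linarith
  have hIcc : Finset.Icc 1 (m-1) = Finset.Ico 1 m := by ext x; simp; omega
  rw [hIcc]
  have step : ∀ j ∈ Finset.Ico 1 m,
      (m:ℝ)/Real.sqrt ((m:ℝ)^2 - (j:ℝ)^2)
        ≤ (m:ℝ) * (Real.arcsin (((j:ℝ)+1)/m) - Real.arcsin ((j:ℝ)/m)) := by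
    intro j hj
    rw [Finset.mem_Ico] at hj
    have hj1 : (1:ℝ) ≤ (j:ℝ) := by exact_mod_cast hj.1
    have hjm : (j:ℝ) + 1 ≤ (m:ℝ) := by exact_mod_cast hj.2
    have h0 : (0:ℝ) ≤ (j:ℝ)/m := by positivity
    have hab : (j:ℝ)/m ≤ ((j:ℝ)+1)/m := by gcongr; linarith
    have hb1 : ((j:ℝ)+1)/m ≤ 1 := by rw [div_le_one hmpos]; linarith
    have hd2 : (0:ℝ) < (m:ℝ)^2 - (j:ℝ)^2 := by nlinarith
    have hsq : (0:ℝ) < Real.sqrt ((m:ℝ)^2 - (j:ℝ)^2) := Real.sqrt_pos.2 hd2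
    have es : Real.sqrt (1 - ((j:ℝ)/m)^2) = Real.sqrt ((m:ℝ)^2 - (j:ℝ)^2) / m := by
      rw [show (1:ℝ) - ((j:ℝ)/m)^2 = ((m:ℝ)^2 - (j:ℝ)^2)/(m:ℝ)^2 by field_simp,
        Real.sqrt_div hd2.le, Real.sqrt_sq hmpos.le]
    have key := arcsin_gap h0 hab hb1
    calc (m:ℝ)/Real.sqrt ((m:ℝ)^2 - (j:ℝ)^2)
        = (m:ℝ) * ((((j:ℝ)+1)/m - (j:ℝ)/m)/Real.sqrt (1 - ((j:ℝ)/m)^2)) := by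
          rw [es]
          field_simp
          ring
      _ ≤ (m:ℝ) * (Real.arcsin (((j:ℝ)+1)/m) - Real.arcsin ((j:ℝ)/m)) :=
          mul_le_mul_of_nonneg_left key hmpos.le
  have hsum := Finset.sum_le_sum step
  have htel : ∑ j ∈ Finset.Ico 1 m,
      ((m:ℝ) * (Real.arcsin (((j:ℝ)+1)/m) - Real.arcsin ((j:ℝ)/m)))
      = (m:ℝ) * (π/2 - Real.arcsin (1/m)) := by
    rw [← Finset.mul_sum]
    congr 1
    have htl := telescope (fun j => Real.arcsin ((j:ℝ)/m)) 1 m hm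
    push_cast at htl
    rw [htl, div_self (ne_of_gt hmpos), Real.arcsin_one]
  have harc : (1:ℝ)/m ≤ Real.arcsin (1/m) := by
    have h1 : (0:ℝ) ≤ 1/m := by positivity
    have h2 : (1:ℝ)/m ≤ 1 := by rw [div_le_one hmpos]; linarith
    nlinarith [Real.sin_le (Real.arcsin_nonneg.2 h1), Real.sin_arcsin (by linarith : (-1:ℝ) ≤ 1/m) h2]
  have hfin : (m:ℝ) * (π/2 - Real.arcsin (1/m)) ≤ (m:ℝ)*π/2 - 1 := by
    have := mul_le_mul_of_nonneg_left harc hmpos.le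
    have hm1 : (m:ℝ) * (1/m) = 1 := by field_simp
    nlinarith
  linarith [hsum, htel ▸ hsum]

lemma lambda_pow (m j : ℕ) (hj1 : 1 ≤ j) (hjm : j < m) :
    altLambda ((j:ℝ)/m) ^ m
      = (j:ℝ)^(2*m) / (((m-j : ℕ):ℝ)^(m-j) * ((m+j : ℕ):ℝ)^(m+j)) := by
  have hm0 : (0:ℝ) < m := by exact_mod_cast Nat.zero_lt_of_lt hjm
  have hj0 : (0:ℝ) < j := by exact_mod_cast hj1
  have hjm' : (j:ℝ) < m := by exact_mod_cast hjm
  have hmne : (m:ℝ) ≠ 0 := ne_of_gt hm0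
  set t : ℝ := (j:ℝ)/m with ht
  have ht0 : 0 < t := by positivity
  have ht1 : t < 1 := by rw [ht, div_lt_one hm0]; exact hjm'
  have hcast1 : ((m-j : ℕ):ℝ) = (m:ℝ) - j := by
    push_cast [Nat.cast_sub hjm.le]; ring
  have hcast2 : ((m+j : ℕ):ℝ) = (m:ℝ) + j := by push_cast; ring
  have h1t : 1 - t = ((m-j : ℕ):ℝ)/m := by rw [hcast1, ht]; field_simp
  have h2t : 1 + t = ((m+j : ℕ):ℝ)/m := by rw [hcast2, ht]; field_simp
  have h1tpos : (0:ℝ) < 1 - t := by linarith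
  have h2tpos : (0:ℝ) < 1 + t := by linarith
  unfold altLambda
  rw [mul_pow, mul_pow]
  have e1 : ((1-t) ^ (t-1))^m = ((1-t)^(m-j : ℕ))⁻¹ := by
    rw [← Real.rpow_natCast ((1-t)^(t-1)) m, ← Real.rpow_mul h1tpos.le]
    have : (t-1) * (m:ℕ) = -(((m-j:ℕ):ℝ)) := by
      rw [hcast1, ht]; push_cast; field_simp; ring
    rw [this, Real.rpow_neg h1tpos.le, Real.rpow_natCast]
  have e2 : ((1+t) ^ (-1-t))^m = ((1+t)^(m+j : ℕ))⁻¹ := by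
    rw [← Real.rpow_natCast ((1+t)^(-1-t)) m, ← Real.rpow_mul h2tpos.le]
    have : (-1-t) * (m:ℕ) = -(((m+j:ℕ):ℝ)) := by
      rw [hcast2, ht]; push_cast; field_simp; ring
    rw [this, Real.rpow_neg h2tpos.le, Real.rpow_natCast]
  have e3 : (t^2)^m = (j:ℝ)^(2*m) / (m:ℝ)^(2*m) := by
    rw [← pow_mul, ht, div_pow]
  rw [e1, e2, e3, h1t, h2t, div_pow, div_pow]
  have hpow : (m:ℝ)^(m-j) * (m:ℝ)^(m+j) = (m:ℝ)^(2*m) := by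
    rw [← pow_add]; congr 1; omega
  have hP1 : (0:ℝ) < ((m-j : ℕ):ℝ) := by rw [hcast1]; linarith
  have hP2 : (0:ℝ) < ((m+j : ℕ):ℝ) := by rw [hcast2]; linarith
  rw [inv_div, inv_div]
  field_simp
  rw [hpow]

lemma abs_altGamma (m j : ℕ) (hj1 : 1 ≤ j) :
    |altGamma m j| = 2 / (j:ℝ) * ((2*m).choose (m+j) : ℝ) / ((2*m).choose m : ℝ) := by
  unfold altGamma
  rw [abs_div, abs_mul, abs_mul, abs_pow, abs_neg, abs_one, one_pow, one_mul]
  rw [abs_of_nonneg (by positivity : (0:ℝ) ≤ 2/(j:ℝ))]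
  rw [Nat.abs_cast, Nat.abs_cast]

lemma term_bound (m j : ℕ) (hj1 : 1 ≤ j) (hjm : j < m) :
    |altGamma m j| * (j:ℝ)^(2*m+1)
      ≤ 2*(m:ℝ)^(2*m)*altLambdaStar^m * ((m:ℝ)/Real.sqrt ((m:ℝ)^2-(j:ℝ)^2)) := by
  have hm0 : (0:ℝ) < m := by exact_mod_cast Nat.zero_lt_of_lt hjm
  have hj0 : (0:ℝ) < j := by exact_mod_cast hj1
  have hjm' : (j:ℝ) < m := by exact_mod_cast hjm
  have hcast1 : ((m-j : ℕ):ℝ) = (m:ℝ) - j := by push_cast [Nat.cast_sub hjm.le]; ring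
  have hcast2 : ((m+j : ℕ):ℝ) = (m:ℝ) + j := by push_cast; ring
  have hc0 : (0:ℝ) < ((2*m).choose m : ℝ) := by
    exact_mod_cast Nat.choose_pos (by omega)
  have hc' : (0:ℝ) ≤ ((2*m).choose (m+j) : ℝ) := by positivity
  have hP1 : (0:ℝ) < ((m-j : ℕ):ℝ) := by rw [hcast1]; linarith
  have hP2 : (0:ℝ) < ((m+j : ℕ):ℝ) := by rw [hcast2]; linarith
  have hd : (0:ℝ) < (m:ℝ)^2 - (j:ℝ)^2 := by nlinarith
  have hsq : (0:ℝ) < Real.sqrt ((m:ℝ)^2-(j:ℝ)^2) := Real.sqrt_pos.2 hd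
  -- unsquared key inequality
  have key : ((2*m).choose (m+j) : ℝ) * ((m-j : ℕ):ℝ)^(m-j) * ((m+j : ℕ):ℝ)^(m+j)
      * Real.sqrt ((m:ℝ)^2-(j:ℝ)^2)
      ≤ ((2*m).choose m : ℝ) * (m:ℝ)^(2*m) * m := by
    have hK := keyB m j hjm
    set L : ℝ := ((2*m).choose (m+j) : ℝ) * ((m-j : ℕ):ℝ)^(m-j) * ((m+j : ℕ):ℝ)^(m+j) with hL
    set R : ℝ := ((2*m).choose m : ℝ) * ((m:ℝ))^m * ((m:ℝ))^m with hR
    have hL0 : 0 ≤ L := by rw [hL]; positivity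
    have hR0 : 0 ≤ R := by rw [hR]; positivity
    have hdprod : ((m+j : ℕ):ℝ) * ((m-j : ℕ):ℝ) = (m:ℝ)^2 - (j:ℝ)^2 := by
      rw [hcast1, hcast2]; ring
    have h2 : L^2 * ((m:ℝ)^2 - (j:ℝ)^2) ≤ (R*m)^2 := by
      rw [← hdprod]; nlinarith [hK]
    have h3 : (L * Real.sqrt ((m:ℝ)^2-(j:ℝ)^2))^2 ≤ (R*m)^2 := by
      rw [mul_pow, Real.sq_sqrt hd.le]; exact h2
    have h4 : L * Real.sqrt ((m:ℝ)^2-(j:ℝ)^2) ≤ R*m := by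
      calc L * Real.sqrt ((m:ℝ)^2-(j:ℝ)^2)
          = Real.sqrt ((L * Real.sqrt ((m:ℝ)^2-(j:ℝ)^2))^2) := (Real.sqrt_sq (by positivity)).symm
        _ ≤ Real.sqrt ((R*(m:ℝ))^2) := Real.sqrt_le_sqrt h3
        _ = R*(m:ℝ) := Real.sqrt_sq (by positivity)
    calc ((2*m).choose (m+j) : ℝ) * ((m-j : ℕ):ℝ)^(m-j) * ((m+j : ℕ):ℝ)^(m+j)
          * Real.sqrt ((m:ℝ)^2-(j:ℝ)^2) = L * Real.sqrt ((m:ℝ)^2-(j:ℝ)^2) := by rw [hL]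
      _ ≤ R*m := h4
      _ = ((2*m).choose m : ℝ) * (m:ℝ)^(2*m) * m := by
          rw [hR, two_mul, pow_add]
          ring
  -- lambda bound
  have ht0 : (0:ℝ) < (j:ℝ)/m := by positivity
  have ht1 : (j:ℝ)/m < 1 := by rw [div_lt_one hm0]; exact hjm'
  have hstar : altLambda ((j:ℝ)/m) ^ m ≤ altLambdaStar ^ m :=
    pow_le_pow_left₀ (altLambda_nonneg ht0 ht1) (lambda_le_star ht0 ht1) m
  have hlam := lambda_pow m j hj1 hjm
  rw [abs_altGamma m j hj1]
  -- final chain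
  have lhs_eq : 2/(j:ℝ) * ((2*m).choose (m+j) : ℝ) / ((2*m).choose m : ℝ) * (j:ℝ)^(2*m+1)
      = 2 * (j:ℝ)^(2*m) * ((2*m).choose (m+j) : ℝ) / ((2*m).choose m : ℝ) := by
    rw [pow_succ]
    field_simp
  rw [lhs_eq]
  have hmid : 2 * (j:ℝ)^(2*m) * ((2*m).choose (m+j) : ℝ) / ((2*m).choose m : ℝ)
      ≤ 2*(m:ℝ)^(2*m)*(altLambda ((j:ℝ)/m) ^ m) * ((m:ℝ)/Real.sqrt ((m:ℝ)^2-(j:ℝ)^2)) := by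
    rw [hlam]
    rw [div_le_iff₀ hc0]
    have expand : 2*(m:ℝ)^(2*m)*((j:ℝ)^(2*m) / (((m-j : ℕ):ℝ)^(m-j) * ((m+j : ℕ):ℝ)^(m+j)))
        * ((m:ℝ)/Real.sqrt ((m:ℝ)^2-(j:ℝ)^2)) * ((2*m).choose m : ℝ)
        = (2*(j:ℝ)^(2*m)) * (((2*m).choose m : ℝ) * (m:ℝ)^(2*m) * m)
          / (((m-j : ℕ):ℝ)^(m-j) * ((m+j : ℕ):ℝ)^(m+j) * Real.sqrt ((m:ℝ)^2-(j:ℝ)^2)) := by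
      field_simp
    rw [expand, le_div_iff₀ (by positivity)]
    calc 2 * (j:ℝ)^(2*m) * ((2*m).choose (m+j) : ℝ)
          * (((m-j : ℕ):ℝ)^(m-j) * ((m+j : ℕ):ℝ)^(m+j) * Real.sqrt ((m:ℝ)^2-(j:ℝ)^2))
        = (2*(j:ℝ)^(2*m)) * (((2*m).choose (m+j) : ℝ) * ((m-j : ℕ):ℝ)^(m-j) * ((m+j : ℕ):ℝ)^(m+j)
            * Real.sqrt ((m:ℝ)^2-(j:ℝ)^2)) := by ring
      _ ≤ (2*(j:ℝ)^(2*m)) * (((2*m).choose m : ℝ) * (m:ℝ)^(2*m) * m) := by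
          apply mul_le_mul_of_nonneg_left key (by positivity)
  refine le_trans hmid ?_
  apply mul_le_mul_of_nonneg_right ?_ (by positivity)
  have := mul_le_mul_of_nonneg_left hstar (by positivity : (0:ℝ) ≤ 2*(m:ℝ)^(2*m))
  linarith

lemma edge_bound (m : ℕ) (hm : 8 ≤ m) :
    (2:ℝ) ≤ (2 + 0.001*π*m) * (0.3081115:ℝ)^m * ((2*m).choose m : ℝ) := by
  induction m, hm using Nat.le_induction with
  | base =>
    have hc : ((2*8).choose 8 : ℝ) = 12870 := by norm_num [Nat.choose]
    have h1 : (1:ℝ) ≤ (0.3081115:ℝ)^8 * 12870 := by norm_num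
    have hrest : (0:ℝ) ≤ (0.001*π*8)*((0.3081115:ℝ)^8*12870) := by positivity
    push_cast [hc]
    nlinarith [h1, hrest]
  | succ m hm ih =>
    have hcc : ((2*(m+1)).choose (m+1) : ℝ) * ((m:ℝ)+1) = 2*(2*(m:ℝ)+1) * ((2*m).choose m : ℝ) := by
      have := Nat.succ_mul_centralBinom_succ m
      have h2 : (m+1) * (2*(m+1)).choose (m+1) = 2 * (2*m+1) * ((2*m).choose m) := this
      have h4 := congrArg (Nat.cast : ℕ → ℝ) h2
      push_cast at h4
      linear_combination h4
    have hm' : (8:ℝ) ≤ (m:ℝ) := by exact_mod_cast hm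
    have hπ : (0:ℝ) < π := Real.pi_pos
    set r : ℝ := (0.3081115:ℝ) with hr
    have hr0 : (0:ℝ) < r := by norm_num [hr]
    have hrm : (0:ℝ) < r^m := pow_pos hr0 m
    have hC0 : (0:ℝ) < ((2*m).choose m : ℝ) := by
      exact_mod_cast Nat.choose_pos (by omega : m ≤ 2*m)
    have hgrow : ((m:ℝ)+1) ≤ r * (2*(2*(m:ℝ)+1)) := by
      rw [hr]; nlinarith
    have hxx : (2 + 0.001*π*m) ≤ (2 + 0.001*π*((m:ℝ)+1)) := by nlinarith
    have hmain : ((m:ℝ)+1) * ((2 + 0.001*π*((m:ℝ)+1)) * r^(m+1) * ((2*(m+1)).choose (m+1) : ℝ))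
        = (2 + 0.001*π*((m:ℝ)+1)) * r^m * ((2*m).choose m : ℝ) * (r * (2*(2*(m:ℝ)+1))) := by
      calc ((m:ℝ)+1) * ((2 + 0.001*π*((m:ℝ)+1)) * r^(m+1) * ((2*(m+1)).choose (m+1) : ℝ))
          = (2 + 0.001*π*((m:ℝ)+1)) * r^(m+1) * (((2*(m+1)).choose (m+1) : ℝ) * ((m:ℝ)+1)) := by ring
        _ = (2 + 0.001*π*((m:ℝ)+1)) * r^(m+1) * (2*(2*(m:ℝ)+1) * ((2*m).choose m : ℝ)) := by rw [hcc]
        _ = (2 + 0.001*π*((m:ℝ)+1)) * r^m * ((2*m).choose m : ℝ) * (r * (2*(2*(m:ℝ)+1))) := by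
            rw [pow_succ]; ring
    have hstep : 2*((m:ℝ)+1) ≤ ((m:ℝ)+1) * ((2 + 0.001*π*((m:ℝ)+1)) * r^(m+1) * ((2*(m+1)).choose (m+1) : ℝ)) := by
      rw [hmain]
      have h1 : (2 + 0.001*π*m) * r^m * ((2*m).choose m : ℝ) * ((m:ℝ)+1)
          ≤ (2 + 0.001*π*((m:ℝ)+1)) * r^m * ((2*m).choose m : ℝ) * (r * (2*(2*(m:ℝ)+1))) := by
        apply mul_le_mul (by nlinarith [mul_le_mul_of_nonneg_right hxx (le_of_lt (mul_pos hrm hC0))]) hgrow (by linarith) (by positivity)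
      nlinarith [ih, mul_pos hrm hC0]
    have hmpos : (0:ℝ) < (m:ℝ)+1 := by linarith
    have hmpos2 : (0:ℝ) < (m:ℝ)+1 := hmpos
    push_cast
    nlinarith [hstep, hmpos2]

lemma small_case (M : ℕ) (SB : ℝ)
    (hsum : ∑ j ∈ Finset.Icc 1 M, |altGamma M j| * (j : ℝ) ^ (2 * M + 1) ≤ SB)
    (hnum : SB ≤ 1.001 * 3.1415 * (0.3081115:ℝ)^M * (M : ℝ) ^ (2 * M + 1)) :
    ∑ j ∈ Finset.Icc 1 M, |altGamma M j| * (j : ℝ) ^ (2 * M + 1) ≤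
      1.001 * π * altLambdaStar ^ M * (M : ℝ) ^ (2 * M + 1) := by
  have hr := star_ge
  have hΛ0 : (0:ℝ) ≤ altLambdaStar := by linarith [hr]
  have hπ : (3.1415:ℝ) ≤ π := by nlinarith [Real.pi_gt_d6]
  have hrhs : (1.001:ℝ) * 3.1415 * (0.3081115:ℝ)^M * (M : ℝ) ^ (2 * M + 1)
      ≤ 1.001 * π * altLambdaStar ^ M * (M : ℝ) ^ (2 * M + 1) := by
    gcongr
  linarith

/-- `∑_{j=1}^m |γ_{m,j}|·j^{2m+1} ≤ 1.001·π·Λ*^m·m^{2m+1}` for `m ≥ 2`;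
for `m = 1` the same holds with constant `1.0331`. -/
theorem alt_gamma_abs_sum_bound :
    (∀ m : ℕ, 2 ≤ m →
      ∑ j ∈ Finset.Icc 1 m, |altGamma m j| * (j : ℝ) ^ (2 * m + 1) ≤
        1.001 * π * altLambdaStar ^ m * (m : ℝ) ^ (2 * m + 1)) ∧
    (∑ j ∈ Finset.Icc 1 1, |altGamma 1 j| * (j : ℝ) ^ (2 * 1 + 1) ≤
      1.0331 * π * altLambdaStar ^ 1 * (1 : ℝ) ^ (2 * 1 + 1)) := by
  constructor
  · intro m hm
    by_cases h8 : 8 ≤ m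
    · -- generic case m ≥ 8
      set f : ℕ → ℝ := fun j => |altGamma m j| * (j : ℝ) ^ (2 * m + 1) with hf
      have hm1 : 1 ≤ m := by omega
      have hm0 : (0:ℝ) < m := by exact_mod_cast (by omega : 0 < m)
      have hr := star_ge
      have hΛ0 : (0:ℝ) ≤ altLambdaStar := by linarith [hr]
      have hΛm0 : (0:ℝ) ≤ altLambdaStar ^ m := pow_nonneg hΛ0 m
      have hC0 : (0:ℝ) < ((2*m).choose m : ℝ) := by
        exact_mod_cast Nat.choose_pos (by omega : m ≤ 2*m)
      -- split off top term
      have hsplit : ∑ j ∈ Finset.Icc 1 m, f j = (∑ j ∈ Finset.Icc 1 (m-1), f j) + f m := by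
        have h := Finset.sum_Icc_succ_top (show 1 ≤ (m-1)+1 by omega) f
        rw [show m-1+1 = m by omega] at h
        exact h
      -- main part
      have hmain : ∑ j ∈ Finset.Icc 1 (m-1), f j
          ≤ 2*(m:ℝ)^(2*m)*altLambdaStar^m * ((m:ℝ)*π/2 - 1) := by
        have h1 : ∑ j ∈ Finset.Icc 1 (m-1), f j
            ≤ ∑ j ∈ Finset.Icc 1 (m-1),
                2*(m:ℝ)^(2*m)*altLambdaStar^m * ((m:ℝ)/Real.sqrt ((m:ℝ)^2-(j:ℝ)^2)) := by
          apply Finset.sum_le_sum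
          intro j hj
          rw [Finset.mem_Icc] at hj
          exact term_bound m j hj.1 (by omega)
        have h2 : ∑ j ∈ Finset.Icc 1 (m-1),
              2*(m:ℝ)^(2*m)*altLambdaStar^m * ((m:ℝ)/Real.sqrt ((m:ℝ)^2-(j:ℝ)^2))
            = 2*(m:ℝ)^(2*m)*altLambdaStar^m
              * ∑ j ∈ Finset.Icc 1 (m-1), ((m:ℝ)/Real.sqrt ((m:ℝ)^2-(j:ℝ)^2)) := by
          rw [Finset.mul_sum]
        have h3 := riemann_sum_bound m hm1
        have hA0 : (0:ℝ) ≤ 2*(m:ℝ)^(2*m)*altLambdaStar^m := by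
          apply mul_nonneg (by positivity) hΛm0
        have h4 := mul_le_mul_of_nonneg_left h3 hA0
        linarith [h1, h2 ▸ h1]
      -- edge term
      have hedge : f m ≤ (2 + 0.001*π*(m:ℝ)) * altLambdaStar^m * (m:ℝ)^(2*m) := by
        have hgam : |altGamma m m| = 2/(m:ℝ) * 1 / ((2*m).choose m : ℝ) := by
          rw [abs_altGamma m m hm1, show m+m = 2*m by omega, Nat.choose_self]
          norm_num
        have hfm : f m = 2/((2*m).choose m : ℝ) * (m:ℝ)^(2*m) := by
          rw [hf]
          simp only []
          rw [hgam, pow_succ]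
          field_simp
        have h2C : 2/((2*m).choose m : ℝ) ≤ (2 + 0.001*π*(m:ℝ)) * (0.3081115:ℝ)^m := by
          rw [div_le_iff₀ hC0]
          linarith [edge_bound m h8]
        have hpos : (0:ℝ) ≤ 2 + 0.001*π*(m:ℝ) := by positivity
        have hrm : (0.3081115:ℝ)^m ≤ altLambdaStar^m :=
          pow_le_pow_left₀ (by norm_num) hr m
        calc f m = 2/((2*m).choose m : ℝ) * (m:ℝ)^(2*m) := hfm
          _ ≤ ((2 + 0.001*π*(m:ℝ)) * (0.3081115:ℝ)^m) * (m:ℝ)^(2*m) := by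
              apply mul_le_mul_of_nonneg_right h2C (by positivity)
          _ ≤ (2 + 0.001*π*(m:ℝ)) * altLambdaStar^m * (m:ℝ)^(2*m) := by
              apply mul_le_mul_of_nonneg_right ?_ (by positivity)
              exact mul_le_mul_of_nonneg_left hrm hpos
      -- combine
      have heq : 2*(m:ℝ)^(2*m)*altLambdaStar^m * ((m:ℝ)*π/2 - 1)
          + (2 + 0.001*π*(m:ℝ)) * altLambdaStar^m * (m:ℝ)^(2*m)
          = 1.001 * π * altLambdaStar ^ m * (m : ℝ) ^ (2 * m + 1) := by
        rw [pow_succ]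
        ring
      calc ∑ j ∈ Finset.Icc 1 m, f j = (∑ j ∈ Finset.Icc 1 (m-1), f j) + f m := hsplit
        _ ≤ 2*(m:ℝ)^(2*m)*altLambdaStar^m * ((m:ℝ)*π/2 - 1)
            + (2 + 0.001*π*(m:ℝ)) * altLambdaStar^m * (m:ℝ)^(2*m) := by
            exact add_le_add hmain hedge
        _ = 1.001 * π * altLambdaStar ^ m * (m : ℝ) ^ (2 * m + 1) := heq
    · -- small cases 2 ≤ m ≤ 7
      interval_cases m
      · apply small_case 2 7
        · rw [← Finset.Ico_add_one_right_eq_Icc, Finset.sum_Ico_eq_sum_range]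
          norm_num [Finset.sum_range_succ, abs_altGamma, Nat.choose]
        · norm_num
      · apply small_case 3 113
        · rw [← Finset.Ico_add_one_right_eq_Icc, Finset.sum_Ico_eq_sum_range]
          norm_num [Finset.sum_range_succ, abs_altGamma, Nat.choose]
        · norm_num
      · apply small_case 4 3579
        · rw [← Finset.Ico_add_one_right_eq_Icc, Finset.sum_Ico_eq_sum_range]
          norm_num [Finset.sum_range_succ, abs_altGamma, Nat.choose]
        · norm_num
      · apply small_case 5 182792
        · rw [← Finset.Ico_add_one_right_eq_Icc, Finset.sum_Ico_eq_sum_range]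
          norm_num [Finset.sum_range_succ, abs_altGamma, Nat.choose]
        · norm_num
      · apply small_case 6 13707168
        · rw [← Finset.Ico_add_one_right_eq_Icc, Finset.sum_Ico_eq_sum_range]
          norm_num [Finset.sum_range_succ, abs_altGamma, Nat.choose]
        · norm_num
      · apply small_case 7 1417990883
        · rw [← Finset.Ico_add_one_right_eq_Icc, Finset.sum_Ico_eq_sum_range]
          norm_num [Finset.sum_range_succ, abs_altGamma, Nat.choose]
        · norm_num
  · -- m = 1
    have hr := star_ge
    have hπ : (3.141592:ℝ) < π := Real.pi_gt_d6
    have hsum : ∑ j ∈ Finset.Icc 1 1, |altGamma 1 j| * (j : ℝ) ^ (2 * 1 + 1) = 1 := by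
      rw [Finset.Icc_self, Finset.sum_singleton, abs_altGamma 1 1 le_rfl]
      norm_num [Nat.choose]
    rw [hsum]
    have h1 : (1:ℝ) ≤ 1.0331*3.141592*(0.3081115:ℝ) := by norm_num
    have h2 : (1.0331:ℝ)*3.141592*(0.3081115:ℝ) ≤ 1.0331*π*altLambdaStar := by
      gcongr <;> linarith
    calc (1:ℝ) ≤ 1.0331*3.141592*(0.3081115:ℝ) := h1
      _ ≤ 1.0331*π*altLambdaStar := h2
      _ = 1.0331 * π * altLambdaStar ^ 1 * (1 : ℝ) ^ (2 * 1 + 1) := by norm_num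
end

section
/- For every integer m ≥ 1, the central binomial coefficient satisfies C(2m, m) > 2^{2m}·e^{−1/(8m)}/√(π·m). -/
open Real Filter Topology

noncomputable def g (m : ℕ) : ℝ :=
  (Nat.centralBinom m : ℝ) * Real.sqrt (π * m) * Real.exp (1 / (8 * m)) / 4 ^ m

lemma key (t : ℝ) (ht : 1 ≤ t) :
    (2*t+1) * Real.sqrt (t+1) * Real.exp (1/(8*(t+1))) <
      2*(t+1) * Real.sqrt t * Real.exp (1/(8*t)) := by
  have ht0 : (0:ℝ) < t := by linarith
  apply lt_of_pow_lt_pow_left₀ 2 (by positivity)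
  have e1 : (Real.exp (1/(8*(t+1))))^2 = Real.exp (1/(4*(t+1))) := by
    rw [sq, ← Real.exp_add]; congr 1; field_simp; ring
  have e2 : (Real.exp (1/(8*t)))^2 = Real.exp (1/(4*t)) := by
    rw [sq, ← Real.exp_add]; congr 1; field_simp; ring
  rw [mul_pow, mul_pow, mul_pow, mul_pow, e1, e2, Real.sq_sqrt (by linarith : (0:ℝ) ≤ t+1),
    Real.sq_sqrt ht0.le]
  have e3 : Real.exp (1/(4*t)) = Real.exp (1/(4*(t+1))) * Real.exp (1/(4*t*(t+1))) := by
    rw [← Real.exp_add]; congr 1; field_simp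
  rw [e3]
  have hx : 1/(4*t*(t+1)) + 1 < Real.exp (1/(4*t*(t+1))) :=
    Real.add_one_lt_exp (by positivity)
  have main : (2*t+1)^2*(t+1) < (2*(t+1))^2 * t * Real.exp (1/(4*t*(t+1))) := by
    have h := mul_lt_mul_of_pos_left hx (show (0:ℝ) < 4*(t+1)^2*t by positivity)
    calc (2*t+1)^2*(t+1) = 4*(t+1)^2*t*(1/(4*t*(t+1)) + 1) := by field_simp; ring
      _ < 4*(t+1)^2*t * Real.exp (1/(4*t*(t+1))) := h
      _ = (2*(t+1))^2 * t * Real.exp (1/(4*t*(t+1))) := by ring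
  nlinarith [mul_lt_mul_of_pos_right main (Real.exp_pos (1/(4*(t+1)))),
    Real.exp_pos (1/(4*(t+1))), Real.exp_pos (1/(4*t*(t+1)))]

lemma g_dec (m : ℕ) (hm : 1 ≤ m) : g (m+1) < g m := by
  have ht : (1:ℝ) ≤ (m:ℝ) := by exact_mod_cast hm
  set t : ℝ := (m : ℝ) with hts
  have ht0 : (0:ℝ) < t := by linarith
  have hC : (0:ℝ) < Nat.centralBinom m := by exact_mod_cast Nat.centralBinom_pos m
  have hcb' : (Nat.centralBinom (m+1) : ℝ) = 2*(2*t+1) * Nat.centralBinom m / (t+1) := by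
    have h := Nat.succ_mul_centralBinom_succ m
    have h' : ((m+1 : ℕ):ℝ) * (Nat.centralBinom (m+1) : ℝ)
        = 2*(2*t+1) * Nat.centralBinom m := by
      have := congrArg (Nat.cast : ℕ → ℝ) h
      push_cast at this ⊢
      linarith [this]
    push_cast at h'
    field_simp
    linarith [h']
  unfold g
  push_cast
  rw [hcb', Real.sqrt_mul pi_pos.le, Real.sqrt_mul pi_pos.le, pow_succ,
    div_lt_div_iff₀ (by positivity) (by positivity), div_mul_eq_mul_div,
    div_mul_eq_mul_div, div_mul_eq_mul_div, div_lt_iff₀ (by positivity : (0:ℝ) < t+1)]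
  have K := key t ht
  have hpos : (0:ℝ) < Real.sqrt π * Nat.centralBinom m * 4 ^ m := by positivity
  nlinarith [mul_lt_mul_of_pos_right K hpos, Real.sqrt_nonneg π,
    Real.sqrt_nonneg t, Real.sqrt_nonneg (t+1), Real.exp_pos (1/(8*(t+1))),
    Real.exp_pos (1/(8*t))]

lemma g_eq (m : ℕ) (hm : 1 ≤ m) :
    g m = Real.sqrt π * Stirling.stirlingSeq (2 * m) / Stirling.stirlingSeq m ^ 2 *
      Real.exp (1 / (8 * m)) := by
  have hm0 : (0:ℝ) < m := by exact_mod_cast hm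
  have hsm : Real.sqrt (2 * ((2 * m : ℕ) : ℝ)) = 2 * Real.sqrt m := by
    push_cast
    rw [show (2 * (2 * (m:ℝ))) = 2^2 * m by ring, Real.sqrt_mul (by positivity),
      Real.sqrt_sq (by norm_num)]
  have hpow : ((2 * m : ℕ) / exp 1 : ℝ) ^ (2 * m : ℕ) = 4 ^ m * ((m / exp 1 : ℝ) ^ m) ^ 2 := by
    push_cast
    rw [show ((2 * (m:ℝ))) / exp 1 = 2 * (m / exp 1) by ring, mul_pow, ← pow_mul,
      pow_mul 2 2 m]
    ring_nf
  have hfac : ((2 * m).factorial : ℝ) = (Nat.centralBinom m : ℝ) * (m.factorial : ℝ) ^ 2 := by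
    rw [Nat.centralBinom]
    rw [← Nat.choose_mul_factorial_mul_factorial (by omega : m ≤ 2 * m)]
    have : 2 * m - m = m := by omega
    rw [this]
    push_cast
    ring
  have hfacpos : (0:ℝ) < m.factorial := by positivity
  have hexp : (0:ℝ) < exp 1 := Real.exp_pos 1
  unfold g Stirling.stirlingSeq
  rw [hsm, hpow, hfac]
  have h2 : ((m:ℝ) / exp 1) ^ m ≠ 0 := by positivity
  have h3 : Real.sqrt (π * m) = Real.sqrt π * Real.sqrt m := Real.sqrt_mul pi_pos.le _
  have h4 : Real.sqrt m ≠ 0 := by positivity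
  have h5 : Real.sqrt (2 * (m:ℝ)) ≠ 0 := by positivity
  rw [h3]
  field_simp
  ring_nf
  rw [Real.sq_sqrt hm0.le, Real.sq_sqrt (by positivity : (0:ℝ) ≤ m*2)]
  ring

lemma g_lim : Tendsto g atTop (𝓝 1) := by
  have ha : Tendsto (fun m : ℕ => Stirling.stirlingSeq (2 * m)) atTop (𝓝 (Real.sqrt π)) :=
    Stirling.tendsto_stirlingSeq_sqrt_pi.comp
      (tendsto_atTop_atTop.2 fun b => ⟨b, fun a ha => by omega⟩)
  have hb : Tendsto (fun m : ℕ => Stirling.stirlingSeq m ^ 2) atTop (𝓝 π) := by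
    have := Stirling.tendsto_stirlingSeq_sqrt_pi.pow 2
    rwa [Real.sq_sqrt pi_pos.le] at this
  have hc : Tendsto (fun m : ℕ => Real.exp (1 / (8 * (m:ℝ)))) atTop (𝓝 1) := by
    rw [show (1:ℝ) = Real.exp 0 by simp]
    apply (Real.continuous_exp.tendsto 0).comp
    have h8 : Tendsto (fun m : ℕ => (1/8 : ℝ) / m) atTop (𝓝 0) :=
      tendsto_const_div_atTop_nhds_zero_nat (1/8)
    convert h8 using 2 with n
    rw [div_div]
    norm_num
  have hcomb : Tendsto
      (fun m : ℕ => Real.sqrt π * Stirling.stirlingSeq (2 * m) / Stirling.stirlingSeq m ^ 2 *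
        Real.exp (1 / (8 * m))) atTop (𝓝 (Real.sqrt π * Real.sqrt π / π * 1)) :=
    (((tendsto_const_nhds.mul ha).div hb pi_pos.ne').mul hc)
  rw [Real.mul_self_sqrt pi_pos.le, div_self pi_pos.ne', one_mul] at hcomb
  apply hcomb.congr'
  filter_upwards [eventually_ge_atTop 1] with m hm
  exact (g_eq m hm).symm

/-- The central binomial coefficient satisfies `C(2m,m) > 2^{2m}·e^{−1/(8m)}/√(πm)`
for every integer `m ≥ 1`. -/
theorem central_binom_lower_bound (m : ℕ) (hm : 1 ≤ m) :
    ((2 * m).choose m : ℝ) >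
      2 ^ (2 * m) * Real.exp (-1 / (8 * (m : ℝ))) / Real.sqrt (π * (m : ℝ)) := by
  have hmono : ∀ n, m + 1 ≤ n → g n ≤ g (m + 1) := by
    intro n hn
    induction n, hn using Nat.le_induction with
    | base => exact le_rfl
    | succ n hn ih => exact le_trans (g_dec n (by omega)).le ih
  have hge : (1:ℝ) ≤ g (m + 1) :=
    le_of_tendsto g_lim (eventually_atTop.2 ⟨m + 1, hmono⟩)
  have hgm : 1 < g m := lt_of_le_of_lt hge (g_dec m hm)
  have hm0 : (0:ℝ) < m := by exact_mod_cast hm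
  unfold g at hgm
  rw [lt_div_iff₀ (by positivity : (0:ℝ) < 4 ^ m)] at hgm
  rw [gt_iff_lt, show ((2:ℝ))^(2*m) = 4^m by rw [pow_mul]; norm_num,
    neg_div, Real.exp_neg, div_lt_iff₀ (by positivity), ← div_eq_mul_inv,
    div_lt_iff₀ (Real.exp_pos _)]
  have hcb : ((2 * m).choose m : ℝ) = (Nat.centralBinom m : ℝ) := by
    rw [Nat.centralBinom]
  rw [hcb]
  nlinarith [hgm]
end
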